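/- arXiv:2003.01154 — 7 statements merged into one kernel-verified Lean document; each statement's English description precedes it below -/
import Mathlib

section
/- Let G=(V,E) be a finite simple graph, let P ⊆ V, and let α > 0 be such that every S ⊆ P with |S| ≤ |P|/2 satisfies |∂_{G[P]}(S)| ≥ α|S|. Let q ≥ 2 be an integer and let ω : V → {1,…,q} be a colouring such that |ω^{−1}(c) ∩ P| ≤ |P|/2 for every colour c. Then the number of edges uv of the induced subgraph G[P] with ω(u) ≠ ω(v) is at least α·|P|/2. -/
open Classical

noncomputable section

namespace Paper

variable {V : Type*}

/-- The degree of a vertex. -/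
def deg (G : SimpleGraph V) (v : V) : ℕ := (G.neighborSet v).ncard

/-- The volume of a vertex set: the sum of the degrees of its vertices. -/
def vol (G : SimpleGraph V) (S : Set V) : ℕ := ∑ᶠ v ∈ S, deg G v

/-- The edge boundary ∂(S): edges of `G` with exactly one endpoint in `S`. -/
def bdry (G : SimpleGraph V) (S : Set V) : Set (Sym2 V) :=
  {e | e ∈ G.edgeSet ∧ (∃ u ∈ e, u ∈ S) ∧ (∃ v ∈ e, v ∉ S)}

/-- The closure ∇(S): edges of `G` with at least one endpoint in `S`. -/
def cl (G : SimpleGraph V) (S : Set V) : Set (Sym2 V) :=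
  {e | e ∈ G.edgeSet ∧ ∃ u ∈ e, u ∈ S}

/-- The conductance φ_G(S) = |∂(S)| / vol_G(S). -/
def cond (G : SimpleGraph V) (S : Set V) : ℝ :=
  ((bdry G S).ncard : ℝ) / (vol G S : ℝ)

/-- The conductance φ(G) of the graph: the minimum of φ_G(S) over nonempty S
with vol_G(S) ≤ vol_G(V)/2. -/
def graphCond [Fintype V] (G : SimpleGraph V) : ℝ :=
  sInf {x : ℝ | ∃ S : Set V, S.Nonempty ∧ 2 * vol G S ≤ vol G Set.univ ∧ x = cond G S}

/-- The induced subgraph G[P], realised as a graph on the same vertex set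
(vertices outside `P` are isolated). -/
def restrict (G : SimpleGraph V) (P : Set V) : SimpleGraph V where
  Adj u v := G.Adj u v ∧ u ∈ P ∧ v ∈ P
  symm := ⟨fun _ _ h => ⟨h.1.symm, h.2.2, h.2.1⟩⟩
  loopless := ⟨fun u h => G.loopless.irrefl u h.1⟩

/-- e(S,T): the number of edges of `G` with one endpoint in `S` and the other in `T \ S`. -/
def eCount (G : SimpleGraph V) (S T : Set V) : ℕ :=
  ({e | e ∈ G.edgeSet ∧ ∃ u v, e = s(u, v) ∧ u ∈ S ∧ v ∈ T \ S}).ncard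

/-- φ(S,B) = e(S,B) / ((vol(B∖S)/vol(B)) · e(S, V∖B)). -/
def condPair (G : SimpleGraph V) (S B : Set V) : ℝ :=
  (eCount G S B : ℝ) /
    (((vol G (B \ S) : ℝ) / (vol G B : ℝ)) * (eCount G S (Set.univ \ B) : ℝ))

/-- An edge is monochromatic under a colouring if all its endpoints get the same colour. -/
def Mono {q : ℕ} (χ : V → Fin q) (e : Sym2 V) : Prop :=
  ∀ u ∈ e, ∀ v ∈ e, χ u = χ v

/-- The number of edges in `F` that are monochromatic under `χ`. -/
def monoCount {q : ℕ} (χ : V → Fin q) (F : Set (Sym2 V)) : ℕ :=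
  {e ∈ F | Mono χ e}.ncard

/-- m_G(χ): the number of monochromatic edges of `G` under `χ`. -/
def mG {q : ℕ} (G : SimpleGraph V) (χ : V → Fin q) : ℕ := monoCount χ G.edgeSet

/-- The q-colour Potts model partition function. -/
def Z [Fintype V] [DecidableEq V] (G : SimpleGraph V) (q : ℕ) (β : ℝ) : ℝ :=
  ∑ ω : V → Fin q, Real.exp (β * (mG G ω : ℝ))

/-- P_1, …, P_ℓ form a partition of the vertex set. -/
def IsPartition {ℓ : ℕ} (P : Fin ℓ → Set V) : Prop :=
  (∀ i j : Fin ℓ, i ≠ j → Disjoint (P i) (P j)) ∧ (⋃ i, P i) = Set.univ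

/-- A set is small (w.r.t. the partition P) if |S ∩ P i| ≤ |P i|/2 for all i. -/
def Small {ℓ : ℕ} (P : Fin ℓ → Set V) (S : Set V) : Prop :=
  ∀ i, ((S ∩ P i).ncard : ℝ) ≤ ((P i).ncard : ℝ) / 2

/-- A set U is sparse if the vertex set of every connected component of G[U] is small. -/
def Sparse {ℓ : ℕ} (G : SimpleGraph V) (P : Fin ℓ → Set V) (U : Set V) : Prop :=
  ∀ u ∈ U, Small P {v | (restrict G U).Reachable u v}

/-- Every `S ⊆ P i` with `|S| ≤ |P i|/2` satisfies `|∂_{G[P i]}(S)| ≥ α |S|`. -/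
def PartExpansion {ℓ : ℕ} (G : SimpleGraph V) (P : Fin ℓ → Set V) (α : ℝ) : Prop :=
  ∀ i, ∀ S ⊆ P i, (S.ncard : ℝ) ≤ ((P i).ncard : ℝ) / 2 →
    α * (S.ncard : ℝ) ≤ ((bdry (restrict G (P i)) S).ncard : ℝ)

/-- A ground state: a colouring constant on each part of the partition. -/
def GroundState {q ℓ : ℕ} (P : Fin ℓ → Set V) (ψ : V → Fin q) : Prop :=
  ∀ i : Fin ℓ, ∀ u ∈ P i, ∀ v ∈ P i, ψ u = ψ v

/-- A state ω is close to a ground state ψ if on each part, more than half of the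
vertices agree with ψ. -/
def CloseTo {q ℓ : ℕ} (P : Fin ℓ → Set V) (ω ψ : V → Fin q) : Prop :=
  ∀ i : Fin ℓ, ((P i).ncard : ℝ) / 2 < ((P i ∩ {v | ω v = ψ v}).ncard : ℝ)

/-- Z*: the contribution to Z from states close to some ground state. -/
def Zstar [Fintype V] [DecidableEq V] {ℓ : ℕ} (G : SimpleGraph V) (P : Fin ℓ → Set V)
    (q : ℕ) (β : ℝ) : ℝ :=
  ∑ ω : V → Fin q,
    if ∃ ψ : V → Fin q, GroundState P ψ ∧ CloseTo P ω ψ then Real.exp (β * (mG G ω : ℝ)) else 0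

/-- The colouring of V that colours γ by `lam` and everything else by `ψ`. -/
def combine {q : ℕ} (γ : Set V) (ψ : V → Fin q) (lam : γ → Fin q) : V → Fin q :=
  fun v => if h : v ∈ γ then lam ⟨v, h⟩ else ψ v

/-- m_G(ψ, γ, λ): the number of edges of ∇(γ) that are monochromatic when γ is
coloured by λ and all other vertices by ψ. -/
def mRes {q : ℕ} (G : SimpleGraph V) (γ : Set V) (ψ : V → Fin q) (lam : γ → Fin q) : ℕ :=
  monoCount (combine γ ψ lam) (cl G γ)

/-- A polymer: a nonempty small set inducing a connected subgraph. -/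
def Polymer {ℓ : ℕ} (G : SimpleGraph V) (P : Fin ℓ → Set V) (γ : Set V) : Prop :=
  γ.Nonempty ∧ (G.induce γ).Connected ∧ Small P γ

/-- Two polymers are compatible if they are disjoint with disjoint edge boundaries. -/
def Compatible (G : SimpleGraph V) (γ γ' : Set V) : Prop :=
  Disjoint γ γ' ∧ Disjoint (bdry G γ) (bdry G γ')

/-- The family of vertex sets of connected components of G[U]. -/
def components (G : SimpleGraph V) (U : Set V) : Set (Set V) :=
  {C | ∃ u ∈ U, C = {v | (restrict G U).Reachable u v}}

/-- if no colour class covers more than half of P, then G[P] has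
at least α|P|/2 bichromatic edges. -/
theorem statement3 [Fintype V] (G : SimpleGraph V) (P : Set V) (α : ℝ) (hα : 0 < α)
    (hexp : ∀ S ⊆ P, (S.ncard : ℝ) ≤ (P.ncard : ℝ) / 2 →
      α * (S.ncard : ℝ) ≤ ((bdry (restrict G P) S).ncard : ℝ))
    (q : ℕ) (hq : 2 ≤ q) (ω : V → Fin q)
    (hω : ∀ c : Fin q, (((ω ⁻¹' {c}) ∩ P).ncard : ℝ) ≤ (P.ncard : ℝ) / 2) :
    α * (P.ncard : ℝ) / 2 ≤
      (({e ∈ (restrict G P).edgeSet | ¬ Mono ω e}).ncard : ℝ) := by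
  classical
  set H := restrict G P with hH
  have hPmem : ∀ e ∈ H.edgeSet, ∀ x ∈ e, x ∈ P := by
    intro e
    induction e using Sym2.ind with
    | _ a b =>
      intro he x hx
      have hadj : H.Adj a b := he
      rcases Sym2.mem_iff.mp hx with rfl | rfl
      · exact hadj.2.1
      · exact hadj.2.2
  set B := {e ∈ H.edgeSet | ¬ Mono ω e} with hBdef
  set Sc : Fin q → Set V := fun c => (ω ⁻¹' {c}) ∩ P with hScdef
  set Dc : Fin q → Set (Sym2 V) := fun c => bdry H (Sc c) with hDcdef
  have hDsub : ∀ c, Dc c ⊆ B := by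
    intro c e he
    refine ⟨he.1, ?_⟩
    rcases he.2.1 with ⟨u, hu, huS⟩
    rcases he.2.2 with ⟨v, hv, hvS⟩
    intro hmono
    have hvP : v ∈ P := hPmem e he.1 v hv
    have hωv : ω v = c := (hmono v hv u hu).trans huS.1
    exact hvS ⟨hωv, hvP⟩
  have hcount : ∀ e ∈ B, (Finset.univ.filter (fun c : Fin q => e ∈ Dc c)).card = 2 := by
    intro e
    induction e using Sym2.ind with
    | _ a b =>
      intro heB
      have hadj : H.Adj a b := heB.1
      have haP : a ∈ P := hadj.2.1
      have hbP : b ∈ P := hadj.2.2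
      have hne : ω a ≠ ω b := by
        intro h
        exact heB.2 (by
          intro u hu v hv
          rcases Sym2.mem_iff.mp hu with rfl | rfl <;>
            rcases Sym2.mem_iff.mp hv with rfl | rfl <;> simp [h])
      have hfe : Finset.univ.filter (fun c : Fin q => s(a, b) ∈ Dc c) = {ω a, ω b} := by
        ext c
        simp only [Finset.mem_filter, Finset.mem_univ, true_and, Finset.mem_insert,
          Finset.mem_singleton]
        constructor
        · rintro ⟨-, ⟨u, hu, huS⟩, -⟩
          rcases Sym2.mem_iff.mp hu with rfl | rfl
          · exact Or.inl huS.1.symm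
          · exact Or.inr huS.1.symm
        · rintro (rfl | rfl)
          · exact ⟨heB.1, ⟨a, Sym2.mem_mk_left a b, rfl, haP⟩,
              ⟨b, Sym2.mem_mk_right a b, fun h => hne h.1.symm⟩⟩
          · exact ⟨heB.1, ⟨b, Sym2.mem_mk_right a b, rfl, hbP⟩,
              ⟨a, Sym2.mem_mk_left a b, fun h => hne h.1⟩⟩
      rw [hfe, Finset.card_insert_of_notMem (by simpa using hne), Finset.card_singleton]
  have hBfin : B.Finite := Set.toFinite _
  set Bf := hBfin.toFinset with hBf
  have hDfilter : ∀ c, ((Dc c).toFinite).toFinset = Bf.filter (fun e => e ∈ Dc c) := by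
    intro c
    ext e
    simp only [Set.Finite.mem_toFinset, Finset.mem_filter, hBf]
    exact ⟨fun h => ⟨hDsub c h, h⟩, fun h => h.2⟩
  have hsum : ∑ c : Fin q, ((Dc c).toFinite).toFinset.card = 2 * Bf.card := by
    calc ∑ c : Fin q, ((Dc c).toFinite).toFinset.card
        = ∑ c : Fin q, ∑ e ∈ Bf, (if e ∈ Dc c then 1 else 0) := by
          refine Finset.sum_congr rfl fun c _ => ?_
          rw [hDfilter c, Finset.card_filter]
      _ = ∑ e ∈ Bf, ∑ c : Fin q, (if e ∈ Dc c then 1 else 0) := Finset.sum_comm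
      _ = ∑ e ∈ Bf, (Finset.univ.filter (fun c : Fin q => e ∈ Dc c)).card := by
          refine Finset.sum_congr rfl fun e _ => ?_
          rw [Finset.card_filter]
      _ = ∑ e ∈ Bf, 2 := by
          refine Finset.sum_congr rfl fun e he => ?_
          exact hcount e (hBfin.mem_toFinset.mp he)
      _ = 2 * Bf.card := by rw [Finset.sum_const, smul_eq_mul, mul_comm]
  have hPcard : P.ncard = ∑ c : Fin q, (Sc c).ncard := by
    rw [Set.ncard_eq_toFinset_card _ P.toFinite]
    rw [Finset.card_eq_sum_card_fiberwise (f := ω) (t := Finset.univ)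
      (fun v _ => Finset.mem_univ (ω v))]
    refine Finset.sum_congr rfl fun c _ => ?_
    rw [Set.ncard_eq_toFinset_card _ ((Sc c).toFinite)]
    congr 1
    ext v
    simp only [Finset.mem_filter, Set.Finite.mem_toFinset, hScdef]
    constructor
    · rintro ⟨hv, h⟩; exact ⟨h, hv⟩
    · rintro ⟨h, hv⟩; exact ⟨hv, h⟩
  have hmain : α * (P.ncard : ℝ) ≤ 2 * (B.ncard : ℝ) := by
    calc α * (P.ncard : ℝ) = ∑ c : Fin q, α * ((Sc c).ncard : ℝ) := by
          rw [← Finset.mul_sum, hPcard]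
          push_cast
          ring
      _ ≤ ∑ c : Fin q, ((Dc c).ncard : ℝ) := by
          refine Finset.sum_le_sum fun c _ => ?_
          exact hexp (Sc c) Set.inter_subset_right (hω c)
      _ = 2 * (B.ncard : ℝ) := by
          rw [Set.ncard_eq_toFinset_card _ hBfin]
          have : ∀ c : Fin q, ((Dc c).ncard : ℝ) = (((Dc c).toFinite).toFinset.card : ℝ) := by
            intro c; rw [Set.ncard_eq_toFinset_card _ ((Dc c).toFinite)]
          simp_rw [this]
          rw [← Nat.cast_sum, hsum]
          push_cast
          ring
  linarith

end Paper

end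
end

section
/- Let G=(V,E) be a finite simple graph on n vertices, q ≥ 2 an integer, P_1,…,P_ℓ a partition of V with |P_i| ≥ ηn for all i (η > 0), and α > 0 such that for every i and every S ⊆ P_i with |S| ≤ |P_i|/2 one has |∂_{G[P_i]}(S)| ≥ α|S|. Let ψ be a ground state, let U ⊆ V be sparse but not small, and let ω : V → {1,…,q} satisfy ω(v) ≠ ψ(v) for all v ∈ U and ω(v) = ψ(v) for all v ∉ U. Then the number of edges of G that are monochromatic under ψ but bichromatic under ω is strictly greater than αηn/2. -/
open Classical

noncomputable section

namespace Paper

variable {V : Type*}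

lemma restrict_adj {G : SimpleGraph V} {P : Set V} {u v : V} :
    (restrict G P).Adj u v ↔ G.Adj u v ∧ u ∈ P ∧ v ∈ P := Iff.rfl

lemma ncard_biUnion_eq {ι α : Type*} (s : Finset ι) (f : ι → Set α)
    (hfin : ∀ i ∈ s, (f i).Finite)
    (hdisj : ∀ i ∈ s, ∀ j ∈ s, i ≠ j → Disjoint (f i) (f j)) :
    (⋃ i ∈ s, f i).ncard = ∑ i ∈ s, (f i).ncard := by
  classical
  induction s using Finset.induction_on with
  | empty => simp
  | @insert a s ha ih =>
    rw [Finset.sum_insert ha]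
    have hun : (⋃ i ∈ insert a s, f i) = f a ∪ ⋃ i ∈ s, f i := by simp
    have hd : Disjoint (f a) (⋃ i ∈ s, f i) := by
      rw [Set.disjoint_iUnion_right]
      intro i
      rw [Set.disjoint_iUnion_right]
      intro hi
      exact hdisj a (Finset.mem_insert_self a s) i (Finset.mem_insert_of_mem hi)
        (by rintro rfl; exact ha hi)
    rw [hun, Set.ncard_union_eq hd (hfin a (Finset.mem_insert_self a s))
      (Set.Finite.biUnion s.finite_toSet (fun i hi => hfin i (Finset.mem_insert_of_mem hi))),
      ih (fun i hi => hfin i (Finset.mem_insert_of_mem hi))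
      (fun i hi j hj hij => hdisj i (Finset.mem_insert_of_mem hi) j
        (Finset.mem_insert_of_mem hj) hij)]

lemma walk_mem_right {G : SimpleGraph V} {U : Set V} :
    ∀ {a b : V}, (restrict G U).Walk a b → a ∈ U → b ∈ U := by
  intro a b p
  induction p with
  | nil => exact id
  | cons h _ ih => intro _; exact ih (restrict_adj.mp h).2.2

/-- if U is sparse but not small, and ω differs from the ground
state ψ exactly on U, then strictly more than αηn/2 edges that are
monochromatic under ψ are bichromatic under ω. -/
theorem statement7 [Fintype V] (G : SimpleGraph V) {ℓ : ℕ} (P : Fin ℓ → Set V)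
    (hP : IsPartition P) (q : ℕ) (hq : 2 ≤ q)
    (η : ℝ) (hη : 0 < η) (hsize : ∀ i, η * (Fintype.card V : ℝ) ≤ ((P i).ncard : ℝ))
    (α : ℝ) (hα : 0 < α) (hexp : PartExpansion G P α)
    (ψ : V → Fin q) (hψ : GroundState P ψ)
    (U : Set V) (hUsparse : Sparse G P U) (hUnotsmall : ¬ Small P U)
    (ω : V → Fin q) (hωU : ∀ v ∈ U, ω v ≠ ψ v) (hωout : ∀ v ∉ U, ω v = ψ v) :
    α * η * (Fintype.card V : ℝ) / 2 <
      (({e ∈ G.edgeSet | Mono ψ e ∧ ¬ Mono ω e}).ncard : ℝ) := by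
  classical
  rw [Small] at hUnotsmall
  push_neg at hUnotsmall
  obtain ⟨i, hi⟩ := hUnotsmall
  set Pi := P i with hPidef
  set M : Set (Sym2 V) := {e ∈ G.edgeSet | Mono ψ e ∧ ¬ Mono ω e} with hMdef
  have hreach : ∀ {a b : V}, (restrict G U).Reachable a b → a ∈ U → b ∈ U :=
    fun h ha => h.elim (fun p => walk_mem_right p ha)
  set cS : V → Set V := fun u => {v | (restrict G U).Reachable u v} with hcSdef
  have hmem_cS : ∀ {u v : V}, v ∈ cS u ↔ (restrict G U).Reachable u v := Iff.rfl
  have hcomp_eq : ∀ {u v : V}, (restrict G U).Reachable u v → cS v = cS u := by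
    intro u v h
    ext w
    exact ⟨fun hw => h.trans hw, fun hw => h.symm.trans hw⟩
  have hKfin : (components G U).Finite := Set.toFinite _
  set K := hKfin.toFinset with hKdef
  set F : Set V → Set (Sym2 V) := fun C => bdry (restrict G Pi) (C ∩ Pi) with hFdef
  have hCU : ∀ C ∈ components G U, C ⊆ U := by
    rintro C ⟨u, hu, rfl⟩ v hv
    exact hreach hv hu
  -- structure of boundary edges
  have hkey : ∀ C ∈ components G U, ∀ a b : V, G.Adj a b → a ∈ Pi → b ∈ Pi →
      a ∈ C → b ∉ C → s(a, b) ∈ M ∧ a ∈ U ∧ b ∉ U := by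
    rintro C ⟨u0, hu0U, rfl⟩ a b hab haP hbP haC hbC
    have haU : a ∈ U := hreach haC hu0U
    have hbU : b ∉ U := by
      intro hbU
      exact hbC (Set.mem_setOf_eq ▸ (haC.trans
        (SimpleGraph.Adj.reachable (restrict_adj.mpr ⟨hab, haU, hbU⟩))))
    have hψab : ψ a = ψ b := hψ i a haP b hbP
    have hm : Mono ψ s(a, b) := by
      intro u hu v hv
      have hu' : u ∈ Pi := by rcases Sym2.mem_iff.1 hu with rfl | rfl; exacts [haP, hbP]
      have hv' : v ∈ Pi := by rcases Sym2.mem_iff.1 hv with rfl | rfl; exacts [haP, hbP]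
      exact hψ i u hu' v hv'
    have hnm : ¬ Mono ω s(a, b) := by
      intro hmono
      have hωab : ω a = ω b := hmono a (Sym2.mem_mk_left a b) b (Sym2.mem_mk_right a b)
      rw [hωout b hbU, ← hψab] at hωab
      exact hωU a haU hωab
    exact ⟨⟨G.mem_edgeSet.2 hab, hm, hnm⟩, haU, hbU⟩
  have hstruct : ∀ C ∈ components G U, ∀ e ∈ F C,
      ∃ a b : V, e = s(a, b) ∧ e ∈ M ∧ a ∈ C ∧ a ∈ U ∧ b ∉ U := by
    intro C hC e
    induction e using Sym2.ind with
    | _ x y =>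
      rintro ⟨he1, ⟨p, hpe, hpS⟩, ⟨r, hre, hrS⟩⟩
      obtain ⟨hab, hxP, hyP⟩ := restrict_adj.mp ((SimpleGraph.mem_edgeSet _).mp he1)
      rcases Sym2.mem_iff.1 hpe with rfl | rfl <;> rcases Sym2.mem_iff.1 hre with rfl | rfl
      · exact absurd hpS hrS
      · have hyC : r ∉ C := fun h => hrS ⟨h, hyP⟩
        obtain ⟨hM, hU1, hU2⟩ := hkey C hC p r hab hxP hyP hpS.1 hyC
        exact ⟨p, r, rfl, hM, hpS.1, hU1, hU2⟩
      · have hxC : r ∉ C := fun h => hrS ⟨h, hxP⟩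
        obtain ⟨hM, hU1, hU2⟩ := hkey C hC p r hab.symm hyP hxP hpS.1 hxC
        exact ⟨p, r, Sym2.eq_swap, Sym2.eq_swap ▸ hM, hpS.1, hU1, hU2⟩
      · exact absurd hpS hrS
  have hcomp_of_mem : ∀ C ∈ components G U, ∀ a ∈ C, C = cS a := by
    rintro C ⟨u, hu, rfl⟩ a ha
    exact (hcomp_eq ha).symm
  -- F C are subsets of M
  have hFsub : ∀ C ∈ components G U, F C ⊆ M := by
    intro C hC e he
    obtain ⟨a, b, rfl, hM, _⟩ := hstruct C hC e he
    exact hM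
  -- F C are pairwise disjoint
  have hFdisj : ∀ C ∈ components G U, ∀ C' ∈ components G U, C ≠ C' →
      Disjoint (F C) (F C') := by
    intro C hC C' hC' hne
    rw [Set.disjoint_left]
    intro e he he'
    obtain ⟨a, b, rfl, _, haC, haU, hbU⟩ := hstruct C hC e he
    obtain ⟨a', b', heq, _, haC', haU', hbU'⟩ := hstruct C' hC' _ he'
    rcases Sym2.eq_iff.1 heq with ⟨rfl, rfl⟩ | ⟨rfl, rfl⟩
    · exact hne ((hcomp_of_mem C hC a haC).trans (hcomp_of_mem C' hC' a haC').symm)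
    · exact hbU haU'
  -- the components cover U ∩ Pi disjointly
  have hcover : (⋃ C ∈ K, (C ∩ Pi)) = U ∩ Pi := by
    ext v
    simp only [Set.mem_iUnion, hKdef, Set.Finite.mem_toFinset]
    constructor
    · rintro ⟨C, hC, hvC, hvP⟩
      exact ⟨hCU C hC hvC, hvP⟩
    · rintro ⟨hvU, hvP⟩
      exact ⟨cS v, ⟨v, hvU, rfl⟩, SimpleGraph.Reachable.refl v, hvP⟩
  have hsmall : ∀ C ∈ components G U, ((C ∩ Pi).ncard : ℝ) ≤ ((Pi).ncard : ℝ) / 2 := by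
    rintro C ⟨u, hu, rfl⟩
    exact hUsparse u hu i
  have hKmem : ∀ C ∈ K, C ∈ components G U := fun C hC => hKfin.mem_toFinset.1 hC
  have hsum1 : (U ∩ Pi).ncard = ∑ C ∈ K, (C ∩ Pi).ncard := by
    rw [← hcover]
    refine ncard_biUnion_eq K _ (fun C _ => Set.toFinite _) ?_
    intro C hC C' hC' hne
    rw [Set.disjoint_left]
    rintro v ⟨hvC, _⟩ ⟨hvC', _⟩
    exact hne ((hcomp_of_mem C (hKmem C hC) v hvC).trans
      (hcomp_of_mem C' (hKmem C' hC') v hvC').symm)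
  have hsum2 : (⋃ C ∈ K, F C).ncard = ∑ C ∈ K, (F C).ncard :=
    ncard_biUnion_eq K F (fun C _ => Set.toFinite _)
      (fun C hC C' hC' hne => hFdisj C (hKmem C hC) C' (hKmem C' hC') hne)
  have hUsub : (⋃ C ∈ K, F C) ⊆ M := by
    intro e he
    simp only [Set.mem_iUnion] at he
    obtain ⟨C, hC, heC⟩ := he
    exact hFsub C (hKmem C hC) heC
  have hcard_le : ((⋃ C ∈ K, F C).ncard : ℝ) ≤ (M.ncard : ℝ) := by
    exact_mod_cast Nat.cast_le.2 (Set.ncard_le_ncard hUsub (Set.toFinite M))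
  have hterm : ∀ C ∈ K, α * ((C ∩ Pi).ncard : ℝ) ≤ ((F C).ncard : ℝ) := by
    intro C hC
    exact hexp i (C ∩ Pi) Set.inter_subset_right (hsmall C (hKmem C hC))
  have hmain : α * ((U ∩ Pi).ncard : ℝ) ≤ (M.ncard : ℝ) := by
    calc α * ((U ∩ Pi).ncard : ℝ) = ∑ C ∈ K, α * ((C ∩ Pi).ncard : ℝ) := by
          rw [hsum1]; push_cast; rw [Finset.mul_sum]
      _ ≤ ∑ C ∈ K, ((F C).ncard : ℝ) := Finset.sum_le_sum hterm
      _ = ((⋃ C ∈ K, F C).ncard : ℝ) := by rw [hsum2]; push_cast; ring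
      _ ≤ (M.ncard : ℝ) := hcard_le
  have h1 : α * (η * (Fintype.card V : ℝ)) ≤ α * ((Pi).ncard : ℝ) :=
    mul_le_mul_of_nonneg_left (hsize i) hα.le
  have h2 : α * (((Pi).ncard : ℝ) / 2) < α * ((U ∩ Pi).ncard : ℝ) :=
    mul_lt_mul_of_pos_left hi hα
  rw [hMdef] at hmain
  nlinarith [hmain, h1, h2]

end Paper

end
end

section
/- Let G=(V,E) be a finite simple graph, q ≥ 2 an integer, P_1,…,P_ℓ a partition of V, and α > 0 such that for every i and every S ⊆ P_i with |S| ≤ |P_i|/2 one has |∂_{G[P_i]}(S)| ≥ α|S|. Let ψ be a ground state and let γ ⊆ V be a nonempty small set. Then for every λ ∈ Λ(γ,ψ): m_G(ψ,γ,λ) ≤ |∇(γ)| − α|γ|. Consequently, for every β ≥ 0, e^{−β|∇(γ)|} · Σ_{λ∈Λ(γ,ψ)} e^{β·m_G(ψ,γ,λ)} ≤ (q−1)^{|γ|} · e^{−βα|γ|}. -/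
open Classical

noncomputable section

namespace Paper

variable {V : Type*}

lemma aux_ncard_iUnion {X : Type*} [Fintype X] {n : ℕ} (B : Fin n → Set X)
    (h : ∀ i j : Fin n, i ≠ j → Disjoint (B i) (B j)) :
    (⋃ i, B i).ncard = ∑ i, (B i).ncard := by
  classical
  have key : (⋃ i, B i).toFinset = Finset.univ.biUnion (fun i => (B i).toFinset) := by
    ext x; simp
  rw [Set.ncard_eq_toFinset_card', key, Finset.card_biUnion]
  · simp [Set.ncard_eq_toFinset_card']
  · intro i _ j _ hij
    simpa [Finset.disjoint_left, Set.disjoint_left.mp (h i j hij)] using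
      Set.disjoint_toFinset.mpr (h i j hij)

lemma aux_restrict_mem {V : Type*} {G : SimpleGraph V} {P : Set V} {e : Sym2 V}
    (he : e ∈ (restrict G P).edgeSet) : ∀ x ∈ e, x ∈ P := by
  induction e using Sym2.ind with
  | _ a b =>
    rw [SimpleGraph.mem_edgeSet] at he
    intro x hx
    rcases Sym2.mem_iff.mp hx with h | h <;> subst h
    exacts [he.2.1, he.2.2]

/-- the polymer weight bound:
every λ ∈ Λ(γ,ψ) has m_G(ψ,γ,λ) ≤ |∇(γ)| − α|γ|, and consequently
e^{−β|∇(γ)|}·R^ψ(γ,β) ≤ (q−1)^{|γ|}·e^{−βα|γ|}. -/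
theorem statement8 [Fintype V] [DecidableEq V] (G : SimpleGraph V) {ℓ : ℕ}
    (P : Fin ℓ → Set V) (hP : IsPartition P) (q : ℕ) (hq : 2 ≤ q)
    (α : ℝ) (hα : 0 < α) (hexp : PartExpansion G P α)
    (ψ : V → Fin q) (hψ : GroundState P ψ)
    (γ : Set V) (hγne : γ.Nonempty) (hγsmall : Small P γ) :
    (∀ lam : γ → Fin q, (∀ v : γ, lam v ≠ ψ ↑v) →
      (mRes G γ ψ lam : ℝ) ≤ ((cl G γ).ncard : ℝ) - α * (γ.ncard : ℝ)) ∧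
    (∀ β : ℝ, 0 ≤ β →
      Real.exp (-β * ((cl G γ).ncard : ℝ)) *
          (∑ lam : γ → Fin q,
            if ∀ v : γ, lam v ≠ ψ ↑v then Real.exp (β * (mRes G γ ψ lam : ℝ)) else 0) ≤
        ((q : ℝ) - 1) ^ γ.ncard * Real.exp (-β * α * (γ.ncard : ℝ))) := by
  classical
  have key : ∀ lam : γ → Fin q, (∀ v : γ, lam v ≠ ψ ↑v) →
      (mRes G γ ψ lam : ℝ) ≤ ((cl G γ).ncard : ℝ) - α * (γ.ncard : ℝ) := by
    intro lam hlam
    set χ := combine γ ψ lam with hχ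
    set N : Set (Sym2 V) := {e ∈ cl G γ | ¬ Mono χ e} with hN
    set B : Fin ℓ → Set (Sym2 V) := fun i => bdry (restrict G (P i)) (γ ∩ P i) with hB
    -- splitting |cl γ| into mono and non-mono parts
    have hMunion : {e ∈ cl G γ | Mono χ e} ∪ N = cl G γ := by
      ext e; by_cases h : Mono χ e <;> simp [hN, h]
    have hsum : (mRes G γ ψ lam : ℝ) + (N.ncard : ℝ) = ((cl G γ).ncard : ℝ) := by
      have : mRes G γ ψ lam + N.ncard = (cl G γ).ncard := by
        rw [mRes, monoCount, ← Set.ncard_union_eq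
          (Set.disjoint_left.mpr fun e he he' => he'.2 he.2) (Set.toFinite _)
          (Set.toFinite _), hMunion]
      exact_mod_cast congrArg (Nat.cast : ℕ → ℝ) this
    -- each part boundary consists of non-monochromatic edges of cl γ
    have hsub : ∀ i, B i ⊆ N := by
      intro i e he
      induction e using Sym2.ind with
      | _ a b =>
        obtain ⟨hE, ⟨u, hue, hu⟩, w, hwe, hw⟩ := he
        have hPall := aux_restrict_mem hE
        have huP : u ∈ P i := hPall u hue
        have hwP : w ∈ P i := hPall w hwe
        rw [SimpleGraph.mem_edgeSet] at hE
        have huγ : u ∈ γ := hu.1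
        have hwγ : w ∉ γ := fun h => hw ⟨h, hwP⟩
        refine ⟨⟨(SimpleGraph.mem_edgeSet G).mpr hE.1, u, hue, huγ⟩, fun hm => ?_⟩
        have h1 : χ u = χ w := hm u hue w hwe
        have h2 : χ u = lam ⟨u, huγ⟩ := by
          show (if h : u ∈ γ then lam ⟨u, h⟩ else ψ u) = _
          rw [dif_pos huγ]
        have h3 : χ w = ψ w := by
          show (if h : w ∈ γ then lam ⟨w, h⟩ else ψ w) = _
          rw [dif_neg hwγ]
        have h4 : ψ u = ψ w := hψ i u huP w hwP
        exact hlam ⟨u, huγ⟩ (by rw [← h2, h1, h3]; exact h4.symm)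
    -- the boundaries are pairwise disjoint
    have hBdisj : ∀ i j : Fin ℓ, i ≠ j → Disjoint (B i) (B j) := by
      intro i j hij
      refine Set.disjoint_left.mpr fun e hei hej => ?_
      obtain ⟨_, ⟨u, hue, hu⟩, _⟩ := hei
      have huPj : u ∈ P j := aux_restrict_mem hej.1 u hue
      exact Set.disjoint_left.mp (hP.1 i j hij) hu.2 huPj
    -- expansion bound:  α |γ| ≤ |N|
    have hγdec : γ = ⋃ i, γ ∩ P i := by
      rw [← Set.inter_iUnion, hP.2, Set.inter_univ]
    have hγcard : γ.ncard = ∑ i, (γ ∩ P i).ncard := by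
      rw [hγdec, aux_ncard_iUnion]
      · rw [← hγdec]
      · intro i j hij
        exact Set.disjoint_of_subset Set.inter_subset_right Set.inter_subset_right
          (hP.1 i j hij)
    have hexchain : α * (γ.ncard : ℝ) ≤ (N.ncard : ℝ) := by
      have h1 : α * (γ.ncard : ℝ) = ∑ i, α * ((γ ∩ P i).ncard : ℝ) := by
        rw [← Finset.mul_sum, hγcard]; push_cast; ring
      have h2 : ∀ i, α * ((γ ∩ P i).ncard : ℝ) ≤ ((B i).ncard : ℝ) := by
        intro i
        exact hexp i (γ ∩ P i) Set.inter_subset_right (hγsmall i)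
      have h3 : (∑ i, ((B i).ncard : ℝ)) = (((⋃ i, B i).ncard : ℕ) : ℝ) := by
        rw [aux_ncard_iUnion B hBdisj]; push_cast; ring
      have h4 : (⋃ i, B i).ncard ≤ N.ncard :=
        Set.ncard_le_ncard (Set.iUnion_subset hsub) (Set.toFinite _)
      calc α * (γ.ncard : ℝ) = ∑ i, α * ((γ ∩ P i).ncard : ℝ) := h1
        _ ≤ ∑ i, ((B i).ncard : ℝ) := Finset.sum_le_sum fun i _ => h2 i
        _ = (((⋃ i, B i).ncard : ℕ) : ℝ) := h3
        _ ≤ (N.ncard : ℝ) := by exact_mod_cast h4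
    linarith
  refine ⟨key, fun β hβ => ?_⟩
  set K : ℝ := ((cl G γ).ncard : ℝ) - α * (γ.ncard : ℝ) with hK
  have hcount : (Finset.univ.filter (fun lam : γ → Fin q => ∀ v : γ, lam v ≠ ψ ↑v)).card
      = (q - 1) ^ γ.ncard := by
    rw [← Fintype.card_subtype]
    rw [Fintype.card_congr (Equiv.subtypePiEquivPi (β := fun _ : γ => Fin q) (p := fun v c => c ≠ ψ ↑v))]
    rw [Fintype.card_pi]
    have hfq : ∀ v : γ, Fintype.card {c : Fin q // c ≠ ψ ↑v} = q - 1 := by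
      intro v
      have := Fintype.card_subtype_compl (fun c : Fin q => c = ψ ↑v)
      simpa [Fintype.card_subtype_eq] using this
    rw [Finset.prod_congr rfl fun v _ => hfq v, Finset.prod_const, Finset.card_univ]
    congr 1
    rw [Set.ncard_eq_toFinset_card', Set.toFinset_card]
  have hsum2 : (∑ lam : γ → Fin q,
      if ∀ v : γ, lam v ≠ ψ ↑v then Real.exp (β * (mRes G γ ψ lam : ℝ)) else 0)
      ≤ ((q - 1 : ℕ) ^ γ.ncard : ℝ) * Real.exp (β * K) := by
    calc (∑ lam : γ → Fin q,
        if ∀ v : γ, lam v ≠ ψ ↑v then Real.exp (β * (mRes G γ ψ lam : ℝ)) else 0)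
        ≤ ∑ lam : γ → Fin q,
          (if ∀ v : γ, lam v ≠ ψ ↑v then Real.exp (β * K) else 0) := by
          refine Finset.sum_le_sum fun lam _ => ?_
          split
          · exact Real.exp_le_exp.mpr (mul_le_mul_of_nonneg_left (key lam ‹_›) hβ)
          · exact le_refl _
      _ = ∑ _lam ∈ Finset.univ.filter (fun lam : γ → Fin q => ∀ v : γ, lam v ≠ ψ ↑v),
            Real.exp (β * K) := by rw [Finset.sum_filter]
      _ = ((q - 1 : ℕ) ^ γ.ncard : ℝ) * Real.exp (β * K) := by
          rw [Finset.sum_const, hcount, nsmul_eq_mul, Nat.cast_pow]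
  have hqcast : ((q - 1 : ℕ) : ℝ) = (q : ℝ) - 1 := by
    have h1 : (1 : ℕ) ≤ q := le_trans (by norm_num) hq
    rw [Nat.cast_sub h1, Nat.cast_one]
  calc Real.exp (-β * ((cl G γ).ncard : ℝ)) *
        (∑ lam : γ → Fin q,
          if ∀ v : γ, lam v ≠ ψ ↑v then Real.exp (β * (mRes G γ ψ lam : ℝ)) else 0)
      ≤ Real.exp (-β * ((cl G γ).ncard : ℝ)) *
        (((q - 1 : ℕ) ^ γ.ncard : ℝ) * Real.exp (β * K)) :=
        mul_le_mul_of_nonneg_left hsum2 (Real.exp_pos _).le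
    _ = ((q : ℝ) - 1) ^ γ.ncard * Real.exp (-β * α * (γ.ncard : ℝ)) := by
        have harg : β * K + -β * ((cl G γ).ncard : ℝ) = -β * α * (γ.ncard : ℝ) := by
          rw [hK]; ring
        rw [mul_comm (Real.exp (-β * ((cl G γ).ncard : ℝ))), mul_assoc, ← Real.exp_add,
          harg, hqcast]

end Paper

end
end

section
/- Let G=(V,E) be a finite simple graph of maximum degree Δ ≥ 1 and let v be a vertex of G. For every integer t ≥ 1, the number of subsets U ⊆ V with v ∈ U, |U| = t, and G[U] connected is at most (eΔ)^t. -/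
open Classical

noncomputable section

namespace Paper

variable {V : Type*}

set_option linter.unusedSectionVars false
set_option maxHeartbeats 1000000

section Statement9Aux

lemma choose_bound (Δ t : ℕ) (hΔ : 1 ≤ Δ) (ht : 1 ≤ t) :
    (((t * Δ).choose (t - 1) : ℕ) : ℝ) ≤ (Real.exp 1 * (Δ : ℝ)) ^ t := by
  have hfact : ((t - 1).factorial : ℝ) > 0 := by positivity
  have h1 : (((t - 1).factorial * (t * Δ).choose (t - 1) : ℕ) : ℝ) ≤ (((t * Δ) ^ (t - 1) : ℕ) : ℝ) := by
    exact_mod_cast (Nat.descFactorial_eq_factorial_mul_choose (t * Δ) (t - 1)) ▸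
      Nat.descFactorial_le_pow (t * Δ) (t - 1)
  push_cast at h1
  have hC : (((t * Δ).choose (t - 1) : ℕ) : ℝ) ≤ ((t : ℝ) * Δ) ^ (t - 1) / (t - 1).factorial := by
    rw [le_div_iff₀ hfact]
    calc (((t * Δ).choose (t - 1) : ℕ) : ℝ) * (t - 1).factorial
        = ((t - 1).factorial : ℝ) * (t * Δ).choose (t - 1) := by ring
      _ ≤ _ := h1
  have hsplit : ((t : ℝ) * Δ) ^ (t - 1) / (t - 1).factorial
      = ((t : ℝ) ^ (t - 1) / (t - 1).factorial) * (Δ : ℝ) ^ (t - 1) := by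
    rw [mul_pow]; ring
  have hfac2 : ((t : ℝ) ^ (t - 1) / (t - 1).factorial) = (t : ℝ) ^ t / (t.factorial) := by
    have h2 : (t : ℝ) ^ t = (t : ℝ) ^ (t - 1) * t := by
      rw [← pow_succ]
      congr 1
      omega
    have h3 : ((t.factorial : ℕ) : ℝ) = (t : ℝ) * ((t - 1).factorial) := by
      exact_mod_cast (Nat.mul_factorial_pred (by omega)).symm
    rw [h2, h3]
    have htpos : (0 : ℝ) < t := by exact_mod_cast ht
    field_simp
  have hexp : (t : ℝ) ^ t / (t.factorial) ≤ Real.exp 1 ^ t := by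
    have := Real.pow_div_factorial_le_exp (x := (t : ℝ)) (by positivity) t
    calc (t : ℝ) ^ t / t.factorial ≤ Real.exp t := this
      _ = Real.exp 1 ^ t := by rw [← Real.exp_nat_mul]; norm_num
  have hΔpow : (Δ : ℝ) ^ (t - 1) ≤ (Δ : ℝ) ^ t :=
    pow_le_pow_right₀ (by exact_mod_cast hΔ) (by omega)
  calc (((t * Δ).choose (t - 1) : ℕ) : ℝ) ≤ ((t : ℝ) * Δ) ^ (t - 1) / (t - 1).factorial := hC
    _ = ((t : ℝ) ^ t / t.factorial) * (Δ : ℝ) ^ (t - 1) := by rw [hsplit, hfac2]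
    _ ≤ Real.exp 1 ^ t * (Δ : ℝ) ^ t := by
        apply mul_le_mul hexp hΔpow (by positivity) (by positivity)
    _ = (Real.exp 1 * Δ) ^ t := (mul_pow _ _ _).symm


lemma exists_iota [Fintype V] (G : SimpleGraph V) (Δ : ℕ) (hΔ : ∀ u : V, deg G u ≤ Δ) :
    ∃ ι : V → V → ℕ, (∀ u : V, Set.InjOn (ι u) (G.neighborSet u)) ∧
      ∀ u w : V, G.Adj u w → ι u w < Δ := by
  have H : ∀ u : V, ∃ f : V → ℕ, Set.InjOn f (G.neighborSet u) ∧
      ∀ w : V, G.Adj u w → f w < Δ := by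
    intro u
    have hcard : Fintype.card (G.neighborSet u) ≤ Fintype.card (Fin Δ) := by
      rw [Fintype.card_fin]
      have : Fintype.card (G.neighborSet u) = (G.neighborSet u).ncard := by
        rw [Set.ncard_eq_toFinset_card']
        simp [Set.toFinset_card]
      rw [this]
      exact hΔ u
    obtain ⟨e⟩ := Function.Embedding.nonempty_of_card_le hcard
    refine ⟨fun w => if h : w ∈ G.neighborSet u then (e ⟨w, h⟩ : Fin Δ).val else 0, ?_, ?_⟩
    · intro a ha b hb hab
      simp only [dif_pos ha, dif_pos hb] at hab
      have : e ⟨a, ha⟩ = e ⟨b, hb⟩ := Fin.val_injective hab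
      have := e.injective this
      exact Subtype.mk_eq_mk.1 this
    · intro w hw
      simp only [dif_pos (show w ∈ G.neighborSet u from hw)]
      exact (e ⟨w, hw⟩).isLt
  choose ι h1 h2 using H
  exact ⟨ι, h1, h2⟩


section Explore

variable [Fintype V] (G : SimpleGraph V) (Δ : ℕ) (ι : V → V → ℕ) (v : V)

/-- Key of a candidate vertex `w` relative to the already-explored list `l`. -/
def key (l : List V) (w : V) : ℕ∞ :=
  ((Finset.range l.length).filter (fun j => G.Adj (l.getD j v) w)).inf
    (fun j => ((j * Δ + ι (l.getD j v) w : ℕ) : ℕ∞))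

/-- Candidate vertices: in `F`, not yet listed, adjacent to something listed. -/
def cand (F : Finset V) (l : List V) : Finset V :=
  (F \ l.toFinset).filter (fun w => key G Δ ι v l w ≠ ⊤)

/-- The canonical next vertex: a candidate of minimal key. -/
def pick (F : Finset V) (l : List V) : V :=
  if h : ∃ w ∈ cand G Δ ι v F l, ∀ w' ∈ cand G Δ ι v F l,
      key G Δ ι v l w ≤ key G Δ ι v l w' then h.choose else v

/-- The exploration sequence of prefixes. -/
def expl (F : Finset V) : ℕ → List V
  | 0 => [v]
  | k+1 => expl F k ++ [pick G Δ ι v F (expl F k)]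

variable {G Δ ι v}

lemma key_ne_top_iff {l : List V} {w : V} :
    key G Δ ι v l w ≠ ⊤ ↔ ∃ j < l.length, G.Adj (l.getD j v) w := by
  unfold key
  constructor
  · intro h
    have hne : ((Finset.range l.length).filter (fun j => G.Adj (l.getD j v) w)).Nonempty := by
      rw [Finset.nonempty_iff_ne_empty]
      intro hempty
      apply h
      rw [hempty]; simp
    obtain ⟨j, hj⟩ := hne
    simp only [Finset.mem_filter, Finset.mem_range] at hj
    exact ⟨j, hj.1, hj.2⟩
  · rintro ⟨j, hj, hadj⟩ htop
    rw [Finset.inf_eq_top_iff] at htop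
    exact WithTop.coe_ne_top (htop j (Finset.mem_filter.2 ⟨Finset.mem_range.2 hj, hadj⟩))

lemma key_le {l : List V} {w : V} {j : ℕ} (hj : j < l.length)
    (hadj : G.Adj (l.getD j v) w) :
    key G Δ ι v l w ≤ ((j * Δ + ι (l.getD j v) w : ℕ) : ℕ∞) := by
  exact Finset.inf_le (Finset.mem_filter.2 ⟨Finset.mem_range.2 hj, hadj⟩)

lemma key_spec {l : List V} {w : V} {n : ℕ} (h : key G Δ ι v l w = (n : ℕ∞)) :
    ∃ j < l.length, G.Adj (l.getD j v) w ∧ n = j * Δ + ι (l.getD j v) w := by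
  have hne : ((Finset.range l.length).filter (fun j => G.Adj (l.getD j v) w)).Nonempty := by
    rw [Finset.nonempty_iff_ne_empty]
    intro hempty
    have : key G Δ ι v l w = ⊤ := by unfold key; rw [hempty]; simp
    rw [h] at this; exact WithTop.coe_ne_top this
  obtain ⟨j, hjmem, hj⟩ := Finset.exists_mem_eq_inf _ hne
    (fun j => ((j * Δ + ι (l.getD j v) w : ℕ) : ℕ∞))
  simp only [Finset.mem_filter, Finset.mem_range] at hjmem
  refine ⟨j, hjmem.1, hjmem.2, ?_⟩
  have : key G Δ ι v l w = ((j * Δ + ι (l.getD j v) w : ℕ) : ℕ∞) := hj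
  rw [h] at this
  exact_mod_cast this

lemma key_unique (hι : ∀ u : V, Set.InjOn (ι u) (G.neighborSet u))
    (hΔι : ∀ u w : V, G.Adj u w → ι u w < Δ)
    {l : List V} {w w' : V} {n : ℕ}
    (h : key G Δ ι v l w = (n : ℕ∞)) (h' : key G Δ ι v l w' = (n : ℕ∞)) : w = w' := by
  obtain ⟨j, hj, hadj, hn⟩ := key_spec h
  obtain ⟨j', hj', hadj', hn'⟩ := key_spec h'
  have hΔpos : 0 < Δ := Nat.pos_of_ne_zero (by rintro rfl; exact Nat.not_lt_zero _ (hΔι _ _ hadj))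
  have hjeq : j = j' := by
    have h1 : n / Δ = j := by
      rw [hn, Nat.mul_comm j Δ, Nat.mul_add_div hΔpos, Nat.div_eq_of_lt (hΔι _ _ hadj)]
      omega
    have h2 : n / Δ = j' := by
      rw [hn', Nat.mul_comm j' Δ, Nat.mul_add_div hΔpos, Nat.div_eq_of_lt (hΔι _ _ hadj')]
      omega
    omega
  subst hjeq
  have hieq : ι (l.getD j v) w = ι (l.getD j v) w' := by
    have h1 : n % Δ = ι (l.getD j v) w := by
      rw [hn, Nat.mul_comm j Δ, Nat.mul_add_mod, Nat.mod_eq_of_lt (hΔι _ _ hadj)]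
    have h2 : n % Δ = ι (l.getD j v) w' := by
      rw [hn', Nat.mul_comm j Δ, Nat.mul_add_mod, Nat.mod_eq_of_lt (hΔι _ _ hadj')]
    omega
  exact hι (l.getD j v) hadj hadj' hieq

lemma expl_length (F : Finset V) (k : ℕ) : (expl G Δ ι v F k).length = k + 1 := by
  induction k with
  | zero => rfl
  | succ k ih => simp [expl, ih]

lemma expl_prefix (F : Finset V) {k m : ℕ} (h : k ≤ m) :
    expl G Δ ι v F k <+: expl G Δ ι v F m := by
  induction m with
  | zero => simp_all
  | succ m ih =>
    rcases Nat.lt_or_ge k (m+1) with h' | h'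
    · exact (ih (Nat.lt_succ_iff.1 h')).trans ⟨[pick G Δ ι v F (expl G Δ ι v F m)], rfl⟩
    · have : k = m + 1 := le_antisymm h h'
      subst this; exact List.prefix_rfl

lemma getD_of_prefix {l l' : List V} (h : l <+: l') {j : ℕ} (hj : j < l.length) :
    l'.getD j v = l.getD j v := by
  rw [List.getD_eq_getElem l v hj, List.getD_eq_getElem l' v (hj.trans_le h.length_le)]
  exact (List.IsPrefix.getElem h hj).symm

lemma key_anti {l l' : List V} (h : l <+: l') (w : V) :
    key G Δ ι v l' w ≤ key G Δ ι v l w := by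
  apply Finset.le_inf
  intro j hj
  simp only [Finset.mem_filter, Finset.mem_range] at hj
  have hlen : j < l'.length := hj.1.trans_le h.length_le
  have hgd : l'.getD j v = l.getD j v := getD_of_prefix h hj.1
  have : key G Δ ι v l' w ≤ ((j * Δ + ι (l'.getD j v) w : ℕ) : ℕ∞) :=
    key_le hlen (by rw [hgd]; exact hj.2)
  rwa [hgd] at this

lemma pick_spec {F : Finset V} {l : List V} (h : (cand G Δ ι v F l).Nonempty) :
    pick G Δ ι v F l ∈ cand G Δ ι v F l ∧
      ∀ w' ∈ cand G Δ ι v F l, key G Δ ι v l (pick G Δ ι v F l) ≤ key G Δ ι v l w' := by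
  have hex : ∃ w ∈ cand G Δ ι v F l, ∀ w' ∈ cand G Δ ι v F l,
      key G Δ ι v l w ≤ key G Δ ι v l w' :=
    Finset.exists_min_image _ (key G Δ ι v l) h
  rw [pick, dif_pos hex]
  exact hex.choose_spec

lemma cand_nonempty {F : Finset V} (hconn : (G.induce (F : Set V)).Connected)
    {l : List V} (hv : v ∈ l) (hsub : ∀ x ∈ l, x ∈ F) (hlt : l.toFinset ⊂ F) :
    (cand G Δ ι v F l).Nonempty := by
  obtain ⟨w0, hw0F, hw0l⟩ := Finset.exists_of_ssubset hlt
  have hvF : v ∈ F := hsub v hv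
  have hreach : (G.induce (F : Set V)).Reachable ⟨v, by simpa using hvF⟩ ⟨w0, by simpa using hw0F⟩ :=
    hconn.preconnected _ _
  refine hreach.elim (fun p => ?_)
  obtain ⟨d, _, hdfst, hdsnd⟩ := p.exists_boundary_dart
    {x : (F : Set V) | (x : V) ∈ l.toFinset} (by simpa using hv) (by simpa using hw0l)
  have hadj : G.Adj (d.fst : V) (d.snd : V) := by
    have := d.adj
    simpa using this
  have hfl : (d.fst : V) ∈ l := by simpa using hdfst
  obtain ⟨j, hj, hget⟩ := List.mem_iff_getElem.1 hfl
  refine ⟨(d.snd : V), ?_⟩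
  rw [cand, Finset.mem_filter, Finset.mem_sdiff]
  refine ⟨⟨d.snd.2, by simpa using hdsnd⟩, ?_⟩
  rw [key_ne_top_iff]
  refine ⟨j, hj, ?_⟩
  rw [List.getD_eq_getElem l v hj, hget]
  exact hadj

lemma v_mem_expl (F : Finset V) (k : ℕ) : v ∈ expl G Δ ι v F k := by
  have h : expl G Δ ι v F 0 <+: expl G Δ ι v F k := expl_prefix F (Nat.zero_le k)
  exact h.subset (by simp [expl])

lemma cand_nonempty_at {F : Finset V} (hvF : v ∈ F)
    (hconn : (G.induce (F : Set V)).Connected) (k : ℕ) (hk : k + 1 < F.card)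
    (hinv : (expl G Δ ι v F k).Nodup ∧ (∀ x ∈ expl G Δ ι v F k, x ∈ F) ∧
      (expl G Δ ι v F k).toFinset.card = k + 1) :
    (cand G Δ ι v F (expl G Δ ι v F k)).Nonempty := by
  obtain ⟨hnd, hsub, hcard⟩ := hinv
  refine cand_nonempty hconn (v_mem_expl F k) hsub ?_
  refine Finset.ssubset_iff_subset_ne.2 ⟨fun x hx => hsub x (List.mem_toFinset.1 hx), ?_⟩
  intro heq
  rw [← heq, hcard] at hk
  omega

lemma expl_inv {F : Finset V} (hvF : v ∈ F) (hconn : (G.induce (F : Set V)).Connected)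
    (k : ℕ) (hk : k < F.card) :
    (expl G Δ ι v F k).Nodup ∧ (∀ x ∈ expl G Δ ι v F k, x ∈ F) ∧
      (expl G Δ ι v F k).toFinset.card = k + 1 := by
  induction k with
  | zero =>
    refine ⟨List.nodup_singleton v, ?_, by simp [expl]⟩
    intro x hx; simp only [expl, List.mem_singleton] at hx; subst hx; exact hvF
  | succ k ih =>
    have hk' : k < F.card := Nat.lt_of_succ_lt hk
    obtain ⟨hnd, hsub, hcard⟩ := ih hk'
    have hpick := (pick_spec (cand_nonempty_at (G := G) (Δ := Δ) (ι := ι) (v := v)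
      hvF hconn k hk ⟨hnd, hsub, hcard⟩)).1
    rw [cand, Finset.mem_filter, Finset.mem_sdiff] at hpick
    obtain ⟨⟨hpF, hpl⟩, -⟩ := hpick
    refine ⟨?_, ?_, ?_⟩
    · rw [expl, List.nodup_append]
      refine ⟨hnd, List.nodup_singleton _, ?_⟩
      intro a ha b hb hab
      simp only [List.mem_singleton] at hb
      subst hb; subst hab
      exact hpl (List.mem_toFinset.2 ha)
    · intro x hx
      rw [expl, List.mem_append] at hx
      rcases hx with hx | hx
      · exact hsub x hx
      · simp only [List.mem_singleton] at hx; subst hx; exact hpF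
    · rw [expl, List.toFinset_append, List.toFinset_cons, List.toFinset_nil,
        insert_empty_eq, Finset.union_comm, ← Finset.insert_eq,
        Finset.card_insert_of_notMem hpl, hcard]

lemma pick_mem {F : Finset V} (hvF : v ∈ F) (hconn : (G.induce (F : Set V)).Connected)
    (k : ℕ) (hk : k + 1 < F.card) :
    pick G Δ ι v F (expl G Δ ι v F k) ∈ cand G Δ ι v F (expl G Δ ι v F k) :=
  (pick_spec (cand_nonempty_at hvF hconn k hk
    (expl_inv hvF hconn k (Nat.lt_of_succ_lt hk)))).1

variable (G Δ ι v) in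
/-- The record of step `k`: the key of the vertex added at step `k`. -/
def rc (F : Finset V) (k : ℕ) : ℕ :=
  (key G Δ ι v (expl G Δ ι v F k) (pick G Δ ι v F (expl G Δ ι v F k))).toNat

lemma rc_key {F : Finset V} (hvF : v ∈ F) (hconn : (G.induce (F : Set V)).Connected)
    (k : ℕ) (hk : k + 1 < F.card) :
    key G Δ ι v (expl G Δ ι v F k) (pick G Δ ι v F (expl G Δ ι v F k))
      = ((rc G Δ ι v F k : ℕ) : ℕ∞) := by
  have h := pick_mem (Δ := Δ) (ι := ι) hvF hconn k hk
  rw [cand, Finset.mem_filter] at h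
  exact (ENat.coe_toNat h.2).symm

lemma rc_bound (hΔι : ∀ u w : V, G.Adj u w → ι u w < Δ)
    {F : Finset V} (hvF : v ∈ F) (hconn : (G.induce (F : Set V)).Connected)
    (k : ℕ) (hk : k + 1 < F.card) : rc G Δ ι v F k < (k + 1) * Δ := by
  obtain ⟨j, hj, hadj, hn⟩ := key_spec (rc_key hvF hconn k hk)
  rw [expl_length] at hj
  have hi := hΔι _ _ hadj
  calc rc G Δ ι v F k = j * Δ + ι ((expl G Δ ι v F k).getD j v) _ := hn
  _ < j * Δ + Δ := by omega
  _ = (j + 1) * Δ := by ring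
  _ ≤ (k + 1) * Δ := Nat.mul_le_mul_right Δ (by omega)

lemma rc_strict (hι : ∀ u : V, Set.InjOn (ι u) (G.neighborSet u))
    (hΔι : ∀ u w : V, G.Adj u w → ι u w < Δ)
    {F : Finset V} (hvF : v ∈ F) (hconn : (G.induce (F : Set V)).Connected)
    (k : ℕ) (hk : k + 2 < F.card) : rc G Δ ι v F k < rc G Δ ι v F (k + 1) := by
  set l := expl G Δ ι v F k with hl
  set w := pick G Δ ι v F l with hw
  set l' := expl G Δ ι v F (k + 1) with hl'
  set w' := pick G Δ ι v F l' with hw'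
  have hll' : l' = l ++ [w] := rfl
  have hstep : expl G Δ ι v F (k + 1) = l ++ [w] := rfl
  have hpre : l <+: l' := ⟨[w], rfl⟩
  have h1 : key G Δ ι v l w = ((rc G Δ ι v F k : ℕ) : ℕ∞) :=
    rc_key hvF hconn k (by omega)
  have h2 : key G Δ ι v l' w' = ((rc G Δ ι v F (k + 1) : ℕ) : ℕ∞) :=
    rc_key hvF hconn (k + 1) (by omega)
  obtain ⟨j', hj', hadj', hn'⟩ := key_spec h2
  have hlen : l.length = k + 1 := expl_length F k
  have hlen' : l'.length = k + 2 := expl_length F (k + 1)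
  rcases Nat.lt_or_ge j' (l.length) with hcase | hcase
  · -- the attaining position is an old one
    have hgd : l'.getD j' v = l.getD j' v := getD_of_prefix hpre hcase
    have hkle : key G Δ ι v l w' ≤ ((rc G Δ ι v F (k + 1) : ℕ) : ℕ∞) := by
      rw [hn', hgd]
      exact key_le hcase (hgd ▸ hadj')
    have hwcand : w' ∈ cand G Δ ι v F l := by
      have hmem := pick_mem (Δ := Δ) (ι := ι) hvF hconn (k + 1) (by omega)
      rw [cand, Finset.mem_filter, Finset.mem_sdiff] at hmem ⊢
      refine ⟨⟨hmem.1.1, fun hc => hmem.1.2 ?_⟩, ?_⟩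
      · rw [hstep, List.toFinset_append]; exact Finset.mem_union_left _ hc
      · intro htop; rw [htop] at hkle; simp at hkle
    have hmin : key G Δ ι v l w ≤ key G Δ ι v l w' :=
      (pick_spec (cand_nonempty_at hvF hconn k (by omega)
        (expl_inv hvF hconn k (by omega)))).2 w' hwcand
    -- key l w' is a coe
    have hne : key G Δ ι v l w' ≠ ⊤ := fun htop => by
      rw [htop] at hkle; simp at hkle
    set m := (key G Δ ι v l w').toNat with hmdef
    have hm : key G Δ ι v l w' = ((m : ℕ) : ℕ∞) := (ENat.coe_toNat hne).symm
    have hmne : m ≠ rc G Δ ι v F k := by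
      intro heq
      have : w = w' := key_unique hι hΔι h1 (by rw [hm, heq])
      have hmem := pick_mem (Δ := Δ) (ι := ι) hvF hconn (k + 1) (by omega)
      rw [cand, Finset.mem_filter, Finset.mem_sdiff] at hmem
      apply hmem.1.2
      rw [hstep, List.toFinset_append]
      refine Finset.mem_union_right _ ?_
      simp only [List.toFinset_cons, List.toFinset_nil, insert_empty_eq, Finset.mem_singleton]
      exact this.symm
    have hle1 : rc G Δ ι v F k ≤ m := by
      rw [h1, hm] at hmin; exact_mod_cast hmin
    have hle2 : m ≤ rc G Δ ι v F (k + 1) := by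
      rw [hm] at hkle; exact_mod_cast hkle
    omega
  · -- the attaining position is the new one: key is at least (k+1)*Δ
    have : (k + 1) * Δ ≤ rc G Δ ι v F (k + 1) := by
      rw [hn']
      have : k + 1 ≤ j' := hlen ▸ hcase
      calc (k + 1) * Δ ≤ j' * Δ := Nat.mul_le_mul_right Δ this
      _ ≤ _ := Nat.le_add_right _ _
    have := rc_bound hΔι hvF hconn k (by omega)
    omega

lemma rc_mono (hι : ∀ u : V, Set.InjOn (ι u) (G.neighborSet u))
    (hΔι : ∀ u w : V, G.Adj u w → ι u w < Δ)
    {F : Finset V} (hvF : v ∈ F) (hconn : (G.induce (F : Set V)).Connected)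
    {a b : ℕ} (hab : a < b) (hb : b + 1 < F.card) :
    rc G Δ ι v F a < rc G Δ ι v F b := by
  induction b with
  | zero => omega
  | succ b ih =>
    rcases Nat.lt_or_ge a b with h | h
    · exact (ih h (by omega)).trans (rc_strict hι hΔι hvF hconn b (by omega))
    · have : a = b := by omega
      subst this
      exact rc_strict hι hΔι hvF hconn a (by omega)

variable (G Δ ι v) in
/-- The code of `F`: the set of records of all exploration steps. -/
def code (F : Finset V) : Finset ℕ := (Finset.range (F.card - 1)).image (rc G Δ ι v F)

section CodeFacts

variable (hι : ∀ u : V, Set.InjOn (ι u) (G.neighborSet u))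
  (hΔι : ∀ u w : V, G.Adj u w → ι u w < Δ)
  {F : Finset V} (hvF : v ∈ F) (hconn : (G.induce (F : Set V)).Connected)

include hι hΔι hvF hconn

lemma rc_injOn : Set.InjOn (rc G Δ ι v F) (Finset.range (F.card - 1)) := by
  intro a ha b hb hab
  simp only [Finset.coe_range, Set.mem_Iio] at ha hb
  by_contra hne
  rcases Nat.lt_or_ge a b with h | h
  · exact absurd hab (Nat.ne_of_lt (rc_mono hι hΔι hvF hconn h (by omega)))
  · have h' : b < a := by omega
    exact absurd hab.symm (Nat.ne_of_lt (rc_mono hι hΔι hvF hconn h' (by omega)))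

lemma code_card : (code G Δ ι v F).card = F.card - 1 := by
  rw [code, Finset.card_image_of_injOn (rc_injOn hι hΔι hvF hconn), Finset.card_range]

omit hι in
lemma code_subset : code G Δ ι v F ⊆ Finset.range (F.card * Δ) := by
  intro x hx
  rw [code, Finset.mem_image] at hx
  obtain ⟨k, hk, rfl⟩ := hx
  rw [Finset.mem_range] at hk ⊢
  have h1 : rc G Δ ι v F k < (k + 1) * Δ := rc_bound hΔι hvF hconn k (by omega)
  have h2 : (k + 1) * Δ ≤ F.card * Δ := Nat.mul_le_mul_right Δ (by omega)
  omega

lemma rc_min {k : ℕ} (hk : k < F.card - 1) :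
    rc G Δ ι v F k ∈ code G Δ ι v F \ (Finset.range k).image (rc G Δ ι v F) ∧
      ∀ x ∈ code G Δ ι v F \ (Finset.range k).image (rc G Δ ι v F), rc G Δ ι v F k ≤ x := by
  constructor
  · rw [Finset.mem_sdiff]
    refine ⟨Finset.mem_image_of_mem _ (Finset.mem_range.2 hk), ?_⟩
    intro hmem
    rw [Finset.mem_image] at hmem
    obtain ⟨m, hm, hrc⟩ := hmem
    rw [Finset.mem_range] at hm
    exact absurd hrc (Nat.ne_of_lt (rc_mono hι hΔι hvF hconn hm (by omega)))
  · intro x hx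
    rw [Finset.mem_sdiff, code, Finset.mem_image] at hx
    obtain ⟨⟨m, hm, rfl⟩, hnotin⟩ := hx
    rw [Finset.mem_range] at hm
    rcases Nat.lt_or_ge m k with h | h
    · exact absurd (Finset.mem_image_of_mem _ (Finset.mem_range.2 h)) hnotin
    · rcases Nat.eq_or_lt_of_le h with rfl | h'
      · exact le_rfl
      · exact (rc_mono hι hΔι hvF hconn h' (by omega)).le

end CodeFacts

lemma expl_take {F : Finset V} {m k : ℕ} (hmk : m ≤ k) :
    expl G Δ ι v F m = (expl G Δ ι v F k).take (m + 1) := by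
  have hpre := expl_prefix (G := G) (Δ := Δ) (ι := ι) (v := v) F hmk
  have := List.prefix_iff_eq_take.1 hpre
  rwa [expl_length] at this

lemma pick_eq_getD {F : Finset V} (m : ℕ) :
    pick G Δ ι v F (expl G Δ ι v F m) = (expl G Δ ι v F (m + 1)).getD (m + 1) v := by
  have hstep : expl G Δ ι v F (m + 1) = expl G Δ ι v F m ++ [pick G Δ ι v F (expl G Δ ι v F m)] :=
    rfl
  have hlen : (expl G Δ ι v F m).length = m + 1 := expl_length F m
  rw [hstep, List.getD_eq_getElem _ _ (by simp [hlen])]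
  exact (List.getElem_concat_length (l := expl G Δ ι v F m) (a := pick G Δ ι v F (expl G Δ ι v F m)) (i := m+1)
    hlen.symm (by simp [hlen])).symm

lemma rc_determined {F₁ F₂ : Finset V} {m k : ℕ} (hmk : m + 1 ≤ k)
    (h : expl G Δ ι v F₁ k = expl G Δ ι v F₂ k) : rc G Δ ι v F₁ m = rc G Δ ι v F₂ m := by
  have hexplm : expl G Δ ι v F₁ m = expl G Δ ι v F₂ m := by
    rw [expl_take (F := F₁) (Nat.le_of_succ_le hmk), expl_take (F := F₂) (Nat.le_of_succ_le hmk), h]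
  have hpick : pick G Δ ι v F₁ (expl G Δ ι v F₁ m) = pick G Δ ι v F₂ (expl G Δ ι v F₂ m) := by
    rw [pick_eq_getD, pick_eq_getD, expl_take (F := F₁) hmk, expl_take (F := F₂) hmk, h]
  rw [rc, rc, hpick, hexplm]

lemma expl_eq_of_code_eq (hι : ∀ u : V, Set.InjOn (ι u) (G.neighborSet u))
    (hΔι : ∀ u w : V, G.Adj u w → ι u w < Δ)
    {F₁ F₂ : Finset V} (hv₁ : v ∈ F₁) (hconn₁ : (G.induce (F₁ : Set V)).Connected)
    (hv₂ : v ∈ F₂) (hconn₂ : (G.induce (F₂ : Set V)).Connected)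
    (hcard : F₁.card = F₂.card) (hcode : code G Δ ι v F₁ = code G Δ ι v F₂) :
    ∀ k, k < F₁.card → expl G Δ ι v F₁ k = expl G Δ ι v F₂ k := by
  intro k
  induction k with
  | zero => intro _; rfl
  | succ k ih =>
    intro hk
    have hIH := ih (by omega)
    have himg : (Finset.range k).image (rc G Δ ι v F₁)
        = (Finset.range k).image (rc G Δ ι v F₂) := by
      apply Finset.image_congr
      intro m hm
      rw [Finset.coe_range, Set.mem_Iio] at hm
      exact rc_determined (Nat.succ_le_of_lt hm) hIH
    have hrc : rc G Δ ι v F₁ k = rc G Δ ι v F₂ k := by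
      have h₁ := rc_min hι hΔι hv₁ hconn₁ (k := k) (by omega)
      have h₂ := rc_min hι hΔι hv₂ hconn₂ (k := k) (by omega)
      rw [hcode, himg] at h₁
      exact le_antisymm (h₁.2 _ h₂.1) (h₂.2 _ h₁.1)
    have hkey₁ : key G Δ ι v (expl G Δ ι v F₁ k) (pick G Δ ι v F₁ (expl G Δ ι v F₁ k))
        = ((rc G Δ ι v F₂ k : ℕ) : ℕ∞) := by
      rw [← hrc]; exact rc_key (Δ := Δ) (ι := ι) hv₁ hconn₁ k hk
    have hkey₂ : key G Δ ι v (expl G Δ ι v F₁ k) (pick G Δ ι v F₂ (expl G Δ ι v F₁ k))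
        = ((rc G Δ ι v F₂ k : ℕ) : ℕ∞) := by
      rw [hIH]; exact rc_key (Δ := Δ) (ι := ι) hv₂ hconn₂ k (by omega)
    have hpick := key_unique hι hΔι hkey₁ hkey₂
    show expl G Δ ι v F₁ k ++ [pick G Δ ι v F₁ (expl G Δ ι v F₁ k)]
      = expl G Δ ι v F₂ k ++ [pick G Δ ι v F₂ (expl G Δ ι v F₂ k)]
    rw [hpick, hIH]

lemma expl_toFinset_eq {F : Finset V} (hvF : v ∈ F)
    (hconn : (G.induce (F : Set V)).Connected) :
    (expl G Δ ι v F (F.card - 1)).toFinset = F := by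
  have hpos : 0 < F.card := Finset.card_pos.2 ⟨v, hvF⟩
  obtain ⟨hnd, hsub, hcard⟩ := expl_inv (Δ := Δ) (ι := ι) hvF hconn (F.card - 1) (by omega)
  apply Finset.eq_of_subset_of_card_le
  · intro x hx; exact hsub x (List.mem_toFinset.1 hx)
  · rw [hcard]; omega

lemma code_inj (hι : ∀ u : V, Set.InjOn (ι u) (G.neighborSet u))
    (hΔι : ∀ u w : V, G.Adj u w → ι u w < Δ)
    {F₁ F₂ : Finset V} (hv₁ : v ∈ F₁) (hconn₁ : (G.induce (F₁ : Set V)).Connected)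
    (hv₂ : v ∈ F₂) (hconn₂ : (G.induce (F₂ : Set V)).Connected)
    (hcard : F₁.card = F₂.card) (hcode : code G Δ ι v F₁ = code G Δ ι v F₂) : F₁ = F₂ := by
  have hpos : 0 < F₁.card := Finset.card_pos.2 ⟨v, hv₁⟩
  have hexpl := expl_eq_of_code_eq hι hΔι hv₁ hconn₁ hv₂ hconn₂ hcard hcode
    (F₁.card - 1) (by omega)
  rw [← expl_toFinset_eq (Δ := Δ) (ι := ι) hv₁ hconn₁,
    ← expl_toFinset_eq (Δ := Δ) (ι := ι) hv₂ hconn₂, ← hcard, hexpl]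

end Explore

end Statement9Aux

/-- the number of connected induced subgraphs on t vertices
containing a fixed vertex v is at most (eΔ)^t. -/
theorem statement9 [Fintype V] (G : SimpleGraph V) (Δ : ℕ) (hΔ1 : 1 ≤ Δ)
    (hΔ : ∀ v : V, deg G v ≤ Δ) (v : V) (t : ℕ) (ht : 1 ≤ t) :
    (({U : Set V | v ∈ U ∧ U.ncard = t ∧ (G.induce U).Connected}).ncard : ℝ) ≤
      (Real.exp 1 * (Δ : ℝ)) ^ t := by
  classical
  obtain ⟨ι, hι1, hι2⟩ := exists_iota G Δ hΔ
  set S := {U : Set V | v ∈ U ∧ U.ncard = t ∧ (G.induce U).Connected} with hS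
  have hface : ∀ U ∈ S, v ∈ (Set.toFinite U).toFinset ∧ (Set.toFinite U).toFinset.card = t ∧
      (G.induce (((Set.toFinite U).toFinset : Finset V) : Set V)).Connected := by
    intro U hU
    obtain ⟨hvU, hcardU, hconnU⟩ := hU
    refine ⟨(Set.Finite.mem_toFinset _).2 hvU, ?_, ?_⟩
    · rw [← Set.ncard_eq_toFinset_card U (Set.toFinite U)]; exact hcardU
    · have h := (Set.Finite.coe_toFinset (Set.toFinite U)).symm
      exact h ▸ hconnU
  have hcount : S.ncard ≤ (t * Δ).choose (t - 1) := by
    have hbound := Set.ncard_le_ncard_of_injOn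
      (f := fun U : Set V => code G Δ ι v (Set.toFinite U).toFinset)
      (s := S) (t := (((Finset.range (t * Δ)).powersetCard (t - 1) : Finset (Finset ℕ)) : Set (Finset ℕ)))
      ?_ ?_ (Finset.finite_toSet _)
    · rwa [Set.ncard_coe_finset, Finset.card_powersetCard, Finset.card_range] at hbound
    · intro U hU
      obtain ⟨hvF, hcardF, hconnF⟩ := hface U hU
      simp only [Finset.mem_coe, Finset.mem_powersetCard]
      constructor
      · have := code_subset (Δ := Δ) (ι := ι) hι2 hvF hconnF
        rwa [hcardF] at this
      · rw [code_card hι1 hι2 hvF hconnF, hcardF]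
    · intro U₁ h₁ U₂ h₂ hcode
      obtain ⟨hv₁, hc₁, hconn₁⟩ := hface U₁ h₁
      obtain ⟨hv₂, hc₂, hconn₂⟩ := hface U₂ h₂
      have hFeq := code_inj hι1 hι2 hv₁ hconn₁ hv₂ hconn₂ (by rw [hc₁, hc₂]) hcode
      rw [← Set.Finite.coe_toFinset (Set.toFinite U₁), ← Set.Finite.coe_toFinset (Set.toFinite U₂),
        hFeq]
  calc (S.ncard : ℝ) ≤ (((t * Δ).choose (t - 1) : ℕ) : ℝ) := by exact_mod_cast hcount
    _ ≤ (Real.exp 1 * (Δ : ℝ)) ^ t := choose_bound Δ t hΔ1 ht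

end Paper

end
end

section
/- Let G=(V,E) be a finite simple graph of maximum degree Δ ≥ 1, let q ≥ 2 be an integer, let α > 0, and let β ≥ (4 + 2·log(qΔ))/α. Then for every vertex v of G: Σ over nonempty U ⊆ V with v ∈ U and G[U] connected of e^{(2 − βα + log(q−1))·|U|} ≤ 1/(Δ+1). -/
open Classical

noncomputable section

namespace Paper

variable {V : Type*}

open SimpleGraph in
lemma splice {G : SimpleGraph V} {v s u : V} (w : G.Walk v v) (hs : s ∈ w.support)
    (h : G.Adj s u) : ∃ w' : G.Walk v v, w'.length = w.length + 2 ∧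
      ∀ x, x ∈ w'.support ↔ x ∈ w.support ∨ x = u := by
  refine ⟨(w.takeUntil s hs).append (Walk.cons h (Walk.cons h.symm (w.dropUntil s hs))), ?_, ?_⟩
  · have h1 := congrArg Walk.length (w.take_spec hs)
    rw [Walk.length_append] at h1
    rw [Walk.length_append]
    simp only [Walk.length_cons]
    omega
  · intro x
    have hw : x ∈ w.support ↔ x ∈ (w.takeUntil s hs).support ∨ x ∈ (w.dropUntil s hs).support := by
      conv_lhs => rw [← w.take_spec hs]
      exact Walk.mem_support_append_iff _ _
    rw [Walk.mem_support_append_iff]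
    simp only [Walk.support_cons, List.mem_cons]
    constructor
    · rintro (h1 | h1 | h1 | h1)
      · exact Or.inl (hw.mpr (Or.inl h1))
      · exact Or.inl (hw.mpr (Or.inr (by rw [h1]; exact Walk.start_mem_support _)))
      · exact Or.inr h1
      · exact Or.inl (hw.mpr (Or.inr h1))
    · rintro (h1 | rfl)
      · rcases hw.mp h1 with h2 | h2
        · exact Or.inl h2
        · exact Or.inr (Or.inr (Or.inr h2))
      · exact Or.inr (Or.inr (Or.inl rfl))

open SimpleGraph in
lemma cover [Fintype V] {G : SimpleGraph V} {v : V} {U : Set V} (hvU : v ∈ U)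
    (hconn : (G.induce U).Connected) :
    ∃ w : G.Walk v v, w.length = 2 * (U.ncard - 1) ∧ {x | x ∈ w.support} = U := by
  have key : ∀ m (S : Set V), v ∈ S → S ⊆ U → (U \ S).ncard = m →
      (∃ w : G.Walk v v, w.length = 2 * (S.ncard - 1) ∧ {x | x ∈ w.support} = S) →
      ∃ w : G.Walk v v, w.length = 2 * (U.ncard - 1) ∧ {x | x ∈ w.support} = U := by
    intro m
    induction m with
    | zero =>
      intro S hvS hSU hc hw
      have he : U \ S = ∅ := by
        rwa [Set.ncard_eq_zero (Set.toFinite _)] at hc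
      have : S = U := hSU.antisymm (Set.diff_eq_empty.mp he)
      rwa [← this]
    | succ m ih =>
      intro S hvS hSU hc hw
      obtain ⟨w, hlen, hsupp⟩ := hw
      have hne : (U \ S).Nonempty := by
        rw [Set.nonempty_iff_ne_empty]
        intro h
        rw [h, Set.ncard_empty] at hc
        omega
      obtain ⟨u0, hu0⟩ := hne
      obtain ⟨p⟩ := hconn.preconnected ⟨v, hvU⟩ ⟨u0, hu0.1⟩
      obtain ⟨d, _, hd1, hd2⟩ := p.exists_boundary_dart {x : ↥U | (x : V) ∈ S} hvS hu0.2
      have hadj : G.Adj ↑d.fst ↑d.snd := d.adj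
      have hsS : (↑d.fst : V) ∈ S := hd1
      have huU : (↑d.snd : V) ∈ U := d.snd.2
      have huS : (↑d.snd : V) ∉ S := hd2
      have hsmem : (↑d.fst : V) ∈ w.support := by
        have : (↑d.fst : V) ∈ {x | x ∈ w.support} := by rw [hsupp]; exact hsS
        exact this
      obtain ⟨w', hlen', hsupp'⟩ := splice w hsmem hadj
      have hdiff : U \ insert (↑d.snd) S = (U \ S) \ {(↑d.snd : V)} := by
        ext x
        simp only [Set.mem_diff, Set.mem_insert_iff, Set.mem_singleton_iff]
        tauto
      refine ih (insert (↑d.snd) S) (Set.mem_insert_of_mem _ hvS) (Set.insert_subset huU hSU)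
        ?_ ?_
      · rw [hdiff, Set.ncard_diff_singleton_of_mem (show (↑d.snd : V) ∈ U \ S from ⟨huU, huS⟩), hc]; omega
      refine ⟨w', ?_, ?_⟩
      · have h1 : S.ncard ≠ 0 := by
          intro h
          rw [Set.ncard_eq_zero (Set.toFinite _)] at h
          simp [h] at hvS
        rw [Set.ncard_insert_of_notMem huS (Set.toFinite _)]
        omega
      · ext x
        rw [Set.mem_setOf_eq, hsupp' x, Set.mem_insert_iff]
        have : x ∈ w.support ↔ x ∈ S := by rw [← hsupp]; rfl
        tauto
  refine key (U \ {v}).ncard {v} rfl (Set.singleton_subset_iff.mpr hvU) rfl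
    ⟨Walk.nil, by simp, by ext x; simp⟩

def chains [Fintype V] (G : SimpleGraph V) (v : V) : ℕ → Finset (List V)
  | 0 => {[v]}
  | n + 1 => (chains G v n).biUnion
      (fun L => ((Set.toFinite (G.neighborSet (L.headD v))).toFinset).image (fun x => x :: L))

lemma mem_chains [Fintype V] (G : SimpleGraph V) (v : V) :
    ∀ n (L : List V), List.Chain' G.Adj L → L.length = n + 1 → L.getLast? = some v →
      L ∈ chains G v n := by
  intro n
  induction n with
  | zero =>
    intro L hc hl hg
    match L, hl with
    | [x], _ =>
      simp only [List.getLast?_singleton, Option.some.injEq] at hg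
      simp [chains, hg]
  | succ n ih =>
    intro L hc hl hg
    match L, hl with
    | x :: y :: L', hl =>
      obtain ⟨hxy, hc'⟩ := List.isChain_cons_cons.mp hc
      simp only [chains, Finset.mem_biUnion]
      refine ⟨y :: L', ih _ hc' (by simpa using hl) (by rw [← hg, List.getLast?_cons_cons]), ?_⟩
      refine Finset.mem_image.mpr ⟨x, ?_, rfl⟩
      rw [Set.Finite.mem_toFinset]
      exact hxy.symm

lemma card_chains [Fintype V] (G : SimpleGraph V) (v : V) (Δ : ℕ)
    (hΔ : ∀ x, deg G x ≤ Δ) : ∀ n, (chains G v n).card ≤ Δ ^ n := by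
  intro n
  induction n with
  | zero => simp [chains]
  | succ n ih =>
    calc (chains G v (n + 1)).card
        ≤ ∑ L ∈ chains G v n,
            (((Set.toFinite (G.neighborSet (L.headD v))).toFinset).image (fun x => x :: L)).card :=
          Finset.card_biUnion_le
      _ ≤ ∑ _L ∈ chains G v n, Δ := by
          refine Finset.sum_le_sum fun L _ => Finset.card_image_le.trans ?_
          rw [← Set.ncard_eq_toFinset_card]
          exact hΔ _
      _ = (chains G v n).card * Δ := by rw [Finset.sum_const, smul_eq_mul]
      _ ≤ Δ ^ n * Δ := Nat.mul_le_mul_right _ ih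
      _ = Δ ^ (n + 1) := (pow_succ Δ n).symm



/-- the Kotecký–Preiss type geometric sum bound. -/
theorem statement10 [Fintype V] (G : SimpleGraph V) (Δ : ℕ) (hΔ1 : 1 ≤ Δ)
    (hΔ : ∀ v : V, deg G v ≤ Δ) (q : ℕ) (hq : 2 ≤ q) (α : ℝ) (hα : 0 < α)
    (β : ℝ) (hβ : (4 + 2 * Real.log ((q : ℝ) * (Δ : ℝ))) / α ≤ β) (v : V) :
    (∑ᶠ U ∈ {U : Set V | U.Nonempty ∧ v ∈ U ∧ (G.induce U).Connected},
        Real.exp ((2 - β * α + Real.log ((q : ℝ) - 1)) * (U.ncard : ℝ))) ≤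
      1 / ((Δ : ℝ) + 1) := by
  classical
  set c : ℝ := 2 - β * α + Real.log ((q : ℝ) - 1) with hcdef
  set Fam : Set (Set V) := {U : Set V | U.Nonempty ∧ v ∈ U ∧ (G.induce U).Connected} with hFam
  have hFamfin : Fam.Finite := Set.toFinite _
  have hΔR : (1 : ℝ) ≤ (Δ : ℝ) := by exact_mod_cast hΔ1
  have hΔpos : (0 : ℝ) < (Δ : ℝ) := lt_of_lt_of_le one_pos hΔR
  have hqR : (2 : ℝ) ≤ (q : ℝ) := by exact_mod_cast hq
  have hE : (7 : ℝ) ≤ Real.exp 2 := by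
    have h := Real.exp_one_gt_d9
    have h2 : Real.exp 2 = Real.exp 1 * Real.exp 1 := by rw [← Real.exp_add]; norm_num
    nlinarith [Real.exp_pos 1]
  set x : ℝ := 1 / (2 * Real.exp 2) with hxdef
  have hxpos : 0 < x := by positivity
  have hxhalf : x ≤ 1 / 2 := by
    rw [hxdef, div_le_div_iff₀ (by positivity) (by norm_num)]
    nlinarith
  have hαβ : 4 + 2 * Real.log ((q : ℝ) * (Δ : ℝ)) ≤ β * α := by
    have := (div_le_iff₀ hα).mp hβ
    linarith
  have hkey : Real.exp c * (Δ : ℝ) ^ 2 ≤ x := by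
    have hlog : Real.log (((q : ℝ) - 1) / (((q : ℝ) * (Δ : ℝ)) ^ 2)) =
        Real.log ((q : ℝ) - 1) - 2 * Real.log ((q : ℝ) * (Δ : ℝ)) := by
      rw [Real.log_div (by linarith) (by positivity), Real.log_pow]
      push_cast; ring
    have hc2 : c ≤ -2 + Real.log (((q : ℝ) - 1) / (((q : ℝ) * (Δ : ℝ)) ^ 2)) := by
      rw [hlog, hcdef]; linarith
    have h3 : Real.exp c ≤ Real.exp (-2) * (((q : ℝ) - 1) / (((q : ℝ) * (Δ : ℝ)) ^ 2)) := by
      calc Real.exp c ≤ Real.exp (-2 + Real.log (((q : ℝ) - 1) / (((q : ℝ) * (Δ : ℝ)) ^ 2))) :=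
            Real.exp_le_exp.mpr hc2
        _ = Real.exp (-2) * (((q : ℝ) - 1) / (((q : ℝ) * (Δ : ℝ)) ^ 2)) := by
            rw [Real.exp_add, Real.exp_log (div_pos (by linarith) (by positivity))]
    have h4 : Real.exp c * (Δ : ℝ) ^ 2 ≤ Real.exp (-2) * (((q : ℝ) - 1) / (q : ℝ) ^ 2) := by
      have heq : Real.exp (-2) * (((q : ℝ) - 1) / (((q : ℝ) * (Δ : ℝ)) ^ 2)) * (Δ : ℝ) ^ 2
          = Real.exp (-2) * (((q : ℝ) - 1) / (q : ℝ) ^ 2) := by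
        field_simp
      calc Real.exp c * (Δ : ℝ) ^ 2
          ≤ Real.exp (-2) * (((q : ℝ) - 1) / (((q : ℝ) * (Δ : ℝ)) ^ 2)) * (Δ : ℝ) ^ 2 :=
            mul_le_mul_of_nonneg_right h3 (by positivity)
        _ = Real.exp (-2) * (((q : ℝ) - 1) / (q : ℝ) ^ 2) := heq
    have h5 : ((q : ℝ) - 1) / (q : ℝ) ^ 2 ≤ 1 / 2 := by
      rw [div_le_div_iff₀ (by positivity) (by norm_num)]
      nlinarith
    have h6 : Real.exp (-2) * (((q : ℝ) - 1) / (q : ℝ) ^ 2) ≤ Real.exp (-2) * (1 / 2) :=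
      mul_le_mul_of_nonneg_left h5 (Real.exp_nonneg _)
    have h7 : Real.exp (-2) * (1 / 2) = x := by
      rw [hxdef, Real.exp_neg]
      field_simp
    linarith
  have hkey2 : Real.exp c ≤ x / (Δ : ℝ) ^ 2 := (le_div_iff₀ (by positivity)).mpr hkey
  have hInh : Inhabited (G.Walk v v) := ⟨SimpleGraph.Walk.nil⟩
  have hcov : ∀ U ∈ Fam, ∃ w : G.Walk v v,
      w.length = 2 * (U.ncard - 1) ∧ {y | y ∈ w.support} = U :=
    fun U hU => cover hU.2.1 hU.2.2
  choose! wf hwlen hwsupp using hcov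
  set n := Fintype.card V with hn
  set Fs : Finset (Set V) := hFamfin.toFinset with hFs
  have hmap : ∀ U ∈ Fs, U.ncard ∈ Finset.range (n + 1) := by
    intro U _
    rw [Finset.mem_range]
    have h1 := Set.ncard_le_ncard (Set.subset_univ U) (Set.toFinite _)
    rw [Set.ncard_univ, Nat.card_eq_fintype_card] at h1
    omega
  have hcard : ∀ k : ℕ,
      ((Fs.filter (fun U => U.ncard = k + 1)).card : ℝ) ≤ ((Δ : ℝ)) ^ (2 * k) := by
    intro k
    have h1 : (Fs.filter (fun U => U.ncard = k + 1)).card ≤ (chains G v (2 * k)).card := by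
      apply Finset.card_le_card_of_injOn (fun U => (wf U).support)
      · intro U hU
        obtain ⟨hU1, hU2⟩ := Finset.mem_filter.mp hU
        have hUFam : U ∈ Fam := (Set.Finite.mem_toFinset hFamfin).mp hU1
        apply mem_chains
        · exact SimpleGraph.Walk.isChain_adj_support _
        · rw [SimpleGraph.Walk.length_support, hwlen U hUFam, hU2]; omega
        · rw [← List.head?_reverse, ← SimpleGraph.Walk.support_reverse,
            SimpleGraph.Walk.support_eq_cons]
          rfl
      · intro U1 h1 U2 h2 heq
        have hU1Fam : U1 ∈ Fam := (Set.Finite.mem_toFinset hFamfin).mp (Finset.mem_filter.mp h1).1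
        have hU2Fam : U2 ∈ Fam := (Set.Finite.mem_toFinset hFamfin).mp (Finset.mem_filter.mp h2).1
        rw [← hwsupp U1 hU1Fam, ← hwsupp U2 hU2Fam]
        simp only [heq]
    have h2 := (h1.trans (card_chains G v Δ hΔ (2 * k)))
    exact_mod_cast h2
  have hsum : (∑ᶠ U ∈ Fam, Real.exp (c * (U.ncard : ℝ)))
      = ∑ U ∈ Fs, Real.exp (c * (U.ncard : ℝ)) := by
    conv_lhs => rw [← Set.Finite.coe_toFinset hFamfin]
    rw [finsum_mem_coe_finset]
  have hfib : ∑ U ∈ Fs, Real.exp (c * (U.ncard : ℝ))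
      = ∑ k ∈ Finset.range (n + 1), ∑ U ∈ Fs.filter (fun U => U.ncard = k),
          Real.exp (c * (U.ncard : ℝ)) :=
    (Finset.sum_fiberwise_of_maps_to hmap _).symm
  have hterm : ∀ k : ℕ, ∑ U ∈ Fs.filter (fun U => U.ncard = k),
      Real.exp (c * (U.ncard : ℝ))
      = ((Fs.filter (fun U => U.ncard = k)).card : ℝ) * Real.exp (c * (k : ℝ)) := by
    intro k
    rw [Finset.sum_congr rfl (fun U hU => by rw [(Finset.mem_filter.mp hU).2]),
      Finset.sum_const, nsmul_eq_mul]
  have hk0 : (Fs.filter (fun U => U.ncard = 0)).card = 0 := by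
    rw [Finset.card_eq_zero, Finset.filter_eq_empty_iff]
    intro U hU
    have hUFam : U ∈ Fam := (Set.Finite.mem_toFinset hFamfin).mp hU
    have := (Set.ncard_pos (Set.toFinite U)).mpr hUFam.1
    omega
  have hstep : ∀ j : ℕ,
      ((Fs.filter (fun U => U.ncard = j + 1)).card : ℝ) * Real.exp (c * ((j + 1 : ℕ) : ℝ))
        ≤ (x / (Δ : ℝ) ^ 2) * x ^ j := by
    intro j
    have he : Real.exp (c * ((j + 1 : ℕ) : ℝ)) = Real.exp c ^ (j + 1) := by
      rw [mul_comm, Real.exp_nat_mul]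
    have h1 : ((Fs.filter (fun U => U.ncard = j + 1)).card : ℝ)
          * Real.exp (c * ((j + 1 : ℕ) : ℝ))
        ≤ (Δ : ℝ) ^ (2 * j) * Real.exp c ^ (j + 1) := by
      rw [he]
      exact mul_le_mul_of_nonneg_right (hcard j) (by positivity)
    have h2 : (Δ : ℝ) ^ (2 * j) * Real.exp c ^ (j + 1)
        = Real.exp c * ((Δ : ℝ) ^ 2 * Real.exp c) ^ j := by
      rw [mul_pow, pow_succ, pow_mul]
      ring
    have h3 : ((Δ : ℝ) ^ 2 * Real.exp c) ^ j ≤ x ^ j := by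
      apply pow_le_pow_left₀ (by positivity)
      rw [mul_comm]
      exact hkey
    have h4 : Real.exp c * ((Δ : ℝ) ^ 2 * Real.exp c) ^ j ≤ (x / (Δ : ℝ) ^ 2) * x ^ j :=
      mul_le_mul hkey2 h3 (by positivity) (by positivity)
    linarith
  have hgeo : ∑ j ∈ Finset.range n, x ^ j ≤ 2 := by
    calc ∑ j ∈ Finset.range n, x ^ j ≤ ∑ j ∈ Finset.range n, (1 / 2 : ℝ) ^ j := by
          apply Finset.sum_le_sum
          intro j _
          exact pow_le_pow_left₀ hxpos.le hxhalf j
      _ ≤ 2 := sum_geometric_two_le n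
  have hfinal : (x / (Δ : ℝ) ^ 2) * 2 ≤ 1 / ((Δ : ℝ) + 1) := by
    have heq : x / (Δ : ℝ) ^ 2 * 2 = 1 / (Real.exp 2 * (Δ : ℝ) ^ 2) := by
      rw [hxdef]
      field_simp
    rw [heq, div_le_div_iff₀ (by positivity) (by positivity)]
    have hsq : (Δ : ℝ) ≤ (Δ : ℝ) ^ 2 := by nlinarith
    nlinarith [Real.exp_pos 2]
  calc (∑ᶠ U ∈ Fam, Real.exp (c * (U.ncard : ℝ)))
      = ∑ k ∈ Finset.range (n + 1), ∑ U ∈ Fs.filter (fun U => U.ncard = k),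
          Real.exp (c * (U.ncard : ℝ)) := by rw [hsum, hfib]
    _ = (∑ j ∈ Finset.range n, ∑ U ∈ Fs.filter (fun U => U.ncard = j + 1),
          Real.exp (c * (U.ncard : ℝ)))
        + ∑ U ∈ Fs.filter (fun U => U.ncard = 0), Real.exp (c * (U.ncard : ℝ)) :=
      Finset.sum_range_succ' _ n
    _ ≤ (∑ j ∈ Finset.range n, (x / (Δ : ℝ) ^ 2) * x ^ j) + 0 := by
      apply add_le_add
      · apply Finset.sum_le_sum
        intro j _
        rw [hterm]
        exact hstep j
      · rw [hterm, hk0]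
        simp
    _ = (x / (Δ : ℝ) ^ 2) * ∑ j ∈ Finset.range n, x ^ j := by
      rw [add_zero, Finset.mul_sum]
    _ ≤ (x / (Δ : ℝ) ^ 2) * 2 :=
      mul_le_mul_of_nonneg_left hgeo (by positivity)
    _ ≤ 1 / ((Δ : ℝ) + 1) := hfinal


end Paper

end
end

section
/- Let G=(V,E) be a finite simple graph, let u ∈ B ⊆ V, write d_V = deg_G(u) and d_B = deg_{G[B]}(u), and suppose vol_G(B) > d_V. Then φ_G(B∖{u}) ≤ φ_G(B) if and only if d_B ≤ (1 − φ_G(B))·d_V/2. -/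
open Classical

noncomputable section

namespace Paper

variable {V : Type*}

lemma mem_bdry (G : SimpleGraph V) (S : Set V) (a b : V) :
    s(a, b) ∈ bdry G S ↔ G.Adj a b ∧ (a ∈ S ∨ b ∈ S) ∧ (a ∉ S ∨ b ∉ S) := by
  simp only [bdry, Set.mem_setOf_eq, Sym2.mem_iff, SimpleGraph.mem_edgeSet,
    exists_eq_or_imp, exists_eq_left]

lemma mem_image_mk (u : V) (N : Set V) (a b : V) :
    s(a, b) ∈ (fun v => s(u, v)) '' N ↔ (a = u ∧ b ∈ N) ∨ (b = u ∧ a ∈ N) := by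
  constructor
  · rintro ⟨v, hv, hve⟩
    simp only at hve
    rw [Sym2.eq_iff] at hve
    rcases hve with ⟨h1, h2⟩ | ⟨h1, h2⟩
    · exact Or.inl ⟨h1.symm, h2 ▸ hv⟩
    · exact Or.inr ⟨h1.symm, h2 ▸ hv⟩
  · rintro (⟨rfl, hb⟩ | ⟨rfl, ha⟩)
    · exact ⟨b, hb, rfl⟩
    · exact ⟨a, ha, Sym2.eq_swap⟩

lemma vol_eq_sum (G : SimpleGraph V) (S : Set V) (hS : S.Finite) :
    vol G S = ∑ v ∈ hS.toFinset, deg G v := by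
  rw [vol, ← finsum_mem_coe_finset, hS.coe_toFinset]

lemma vol_sdiff_add [Fintype V] (G : SimpleGraph V) (B : Set V) (u : V) (hu : u ∈ B) :
    vol G (B \ {u}) + deg G u = vol G B := by
  have hB : B.Finite := Set.toFinite B
  have hB' : (B \ {u}).Finite := hB.diff
  rw [vol_eq_sum G B hB, vol_eq_sum G _ hB']
  have he : hB'.toFinset = hB.toFinset.erase u := by
    ext v
    simp only [Set.Finite.mem_toFinset, Finset.mem_erase, Set.mem_diff,
      Set.mem_singleton_iff]
    tauto
  rw [he]
  exact Finset.sum_erase_add _ _ (hB.mem_toFinset.mpr hu)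

lemma deg_restrict (G : SimpleGraph V) (B : Set V) (u : V) (hu : u ∈ B) :
    (restrict G B).neighborSet u = G.neighborSet u ∩ B := by
  ext v
  simp only [SimpleGraph.mem_neighborSet, restrict, Set.mem_inter_iff]
  tauto

lemma bdry_erase (G : SimpleGraph V) (B : Set V) (u : V) (hu : u ∈ B) :
    bdry G (B \ {u}) ∪ (fun v => s(u, v)) '' (G.neighborSet u \ B)
      = bdry G B ∪ (fun v => s(u, v)) '' (G.neighborSet u ∩ B) := by
  ext e
  induction e using Sym2.ind with
  | _ a b =>
    simp only [Set.mem_union, mem_bdry, mem_image_mk, Set.mem_diff, Set.mem_inter_iff,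
      Set.mem_singleton_iff, SimpleGraph.mem_neighborSet]
    by_cases hau : a = u
    · subst hau
      have hne : ∀ h : G.Adj a b, b ≠ a := fun h => (G.ne_of_adj h).symm
      constructor
      · rintro (⟨hadj, hmem, -⟩ | ⟨-, hadj, hbB⟩ | ⟨rfl, hadj, haB⟩)
        · rcases hmem with ⟨haB, hne'⟩ | ⟨hbB, hne'⟩
          · exact absurd rfl hne'
          · exact Or.inr (Or.inl ⟨rfl, hadj, hbB⟩)
        · exact Or.inl ⟨hadj, Or.inl hu, Or.inr hbB⟩
        · exact (G.irrefl hadj).elim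
      · rintro (⟨hadj, -, hnmem⟩ | ⟨-, hadj, hbB⟩ | ⟨rfl, hadj, haB⟩)
        · rcases hnmem with hnaB | hnbB
          · exact absurd hu hnaB
          · exact Or.inr (Or.inl ⟨rfl, hadj, hnbB⟩)
        · exact Or.inl ⟨hadj, Or.inr ⟨hbB, hne hadj⟩, Or.inl (fun h => h.2 rfl)⟩
        · exact (G.irrefl hadj).elim
    · by_cases hbu : b = u
      · subst hbu
        constructor
        · rintro (⟨hadj, hmem, -⟩ | ⟨rfl, hadj, hbB⟩ | ⟨-, hadj, haB⟩)
          · rcases hmem with ⟨haB, -⟩ | ⟨hbB, hne'⟩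
            · exact Or.inr (Or.inr ⟨rfl, hadj.symm, haB⟩)
            · exact absurd rfl hne'
          · exact absurd rfl hau
          · exact Or.inl ⟨hadj.symm, Or.inr hu, Or.inl haB⟩
        · rintro (⟨hadj, -, hnmem⟩ | ⟨rfl, hadj, hbB⟩ | ⟨-, hadj, haB⟩)
          · rcases hnmem with hnaB | hnbB
            · exact Or.inr (Or.inr ⟨rfl, hadj.symm, hnaB⟩)
            · exact absurd hu hnbB
          · exact absurd rfl hau
          · exact Or.inl ⟨hadj.symm, Or.inl ⟨haB, hau⟩, Or.inr (fun h => h.2 rfl)⟩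
      · constructor
        · rintro (⟨hadj, hmem, hnmem⟩ | ⟨rfl, -, -⟩ | ⟨rfl, -, -⟩)
          · refine Or.inl ⟨hadj, ?_, ?_⟩
            · rcases hmem with ⟨h1, -⟩ | ⟨h1, -⟩
              · exact Or.inl h1
              · exact Or.inr h1
            · rcases hnmem with h1 | h1
              · exact Or.inl (fun hh => h1 ⟨hh, hau⟩)
              · exact Or.inr (fun hh => h1 ⟨hh, hbu⟩)
          · exact absurd rfl hau
          · exact absurd rfl hbu
        · rintro (⟨hadj, hmem, hnmem⟩ | ⟨rfl, -, -⟩ | ⟨rfl, -, -⟩)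
          · refine Or.inl ⟨hadj, ?_, ?_⟩
            · rcases hmem with h1 | h1
              · exact Or.inl ⟨h1, hau⟩
              · exact Or.inr ⟨h1, hbu⟩
            · rcases hnmem with h1 | h1
              · exact Or.inl (fun hh => h1 hh.1)
              · exact Or.inr (fun hh => h1 hh.1)
          · exact absurd rfl hau
          · exact absurd rfl hbu

lemma bdry_erase_card [Fintype V] (G : SimpleGraph V) (B : Set V) (u : V) (hu : u ∈ B) :
    (bdry G (B \ {u})).ncard + (G.neighborSet u \ B).ncard
      = (bdry G B).ncard + (G.neighborSet u ∩ B).ncard := by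
  have hinj : Function.Injective (fun v : V => s(u, v)) := by
    intro a b h; exact Sym2.congr_right.mp h
  have hd1 : Disjoint (bdry G (B \ {u})) ((fun v => s(u, v)) '' (G.neighborSet u \ B)) := by
    rw [Set.disjoint_right]
    rintro e ⟨v, ⟨hadj, hvB⟩, rfl⟩
    rw [mem_bdry]
    rintro ⟨-, hmem, -⟩
    rcases hmem with ⟨-, hne⟩ | ⟨hvB', -⟩
    · exact hne rfl
    · exact hvB hvB'
  have hd2 : Disjoint (bdry G B) ((fun v => s(u, v)) '' (G.neighborSet u ∩ B)) := by
    rw [Set.disjoint_right]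
    rintro e ⟨v, ⟨hadj, hvB⟩, rfl⟩
    rw [mem_bdry]
    rintro ⟨-, -, hnmem⟩
    rcases hnmem with h1 | h1
    · exact h1 hu
    · exact h1 hvB
  have h1 := bdry_erase G B u hu
  have := congrArg Set.ncard h1
  rwa [Set.ncard_union_eq hd1 (Set.toFinite _) (Set.toFinite _),
    Set.ncard_union_eq hd2 (Set.toFinite _) (Set.toFinite _),
    Set.ncard_image_of_injective _ hinj, Set.ncard_image_of_injective _ hinj] at this

/-- removing a vertex does not increase conductance iff
d_B ≤ (1 − φ(B))·d_V/2. -/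
theorem statement12 [Fintype V] (G : SimpleGraph V) (B : Set V) (u : V) (hu : u ∈ B)
    (h : deg G u < vol G B) :
    cond G (B \ {u}) ≤ cond G B ↔
      (deg (restrict G B) u : ℝ) ≤ (1 - cond G B) * (deg G u : ℝ) / 2 := by
  -- notation
  set m : ℝ := ((vol G B : ℕ) : ℝ) with hm
  set d : ℝ := ((deg G u : ℕ) : ℝ) with hd
  set b : ℝ := (((bdry G B).ncard : ℕ) : ℝ) with hb
  set b' : ℝ := (((bdry G (B \ {u})).ncard : ℕ) : ℝ) with hb'
  set k : ℝ := ((deg (restrict G B) u : ℕ) : ℝ) with hk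
  have hd0 : (0 : ℝ) ≤ d := by rw [hd]; positivity
  have hmd : d < m := by rw [hd, hm]; exact_mod_cast h
  have hm0 : (0 : ℝ) < m := lt_of_le_of_lt hd0 hmd
  -- volume identity
  have hvol : ((vol G (B \ {u}) : ℕ) : ℝ) = m - d := by
    have h1 := vol_sdiff_add G B u hu
    have h2 : ((vol G (B \ {u}) : ℕ) : ℝ) + d = m := by
      rw [hd, hm]; exact_mod_cast h1
    linarith
  -- degree split
  have hnin : (((G.neighborSet u ∩ B).ncard : ℕ) : ℝ) = k := by
    rw [hk]; simp only [deg, deg_restrict G B u hu]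
  have hsplit : (((G.neighborSet u \ B).ncard : ℕ) : ℝ) + k = d := by
    have h1 : (G.neighborSet u \ B).ncard + (G.neighborSet u ∩ B).ncard
        = (G.neighborSet u).ncard := by
      have hdisj : Disjoint (G.neighborSet u \ B) (G.neighborSet u ∩ B) := by
        rw [Set.disjoint_left]
        rintro x ⟨-, hx⟩ ⟨-, hx'⟩
        exact hx hx'
      rw [← Set.ncard_union_eq hdisj (Set.toFinite _) (Set.toFinite _),
        Set.diff_union_inter]
    have h2 := congrArg (fun n : ℕ => (n : ℝ)) h1
    push_cast at h2
    rw [hnin] at h2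
    rw [hd]
    simpa [deg] using h2
  -- boundary identity
  have hbd : b' = b + 2 * k - d := by
    have h1 := bdry_erase_card G B u hu
    have h2 : b' + (((G.neighborSet u \ B).ncard : ℕ) : ℝ)
        = b + (((G.neighborSet u ∩ B).ncard : ℕ) : ℝ) := by
      rw [hb', hb]; exact_mod_cast h1
    rw [hnin] at h2
    linarith
  -- conductances
  have hcB : cond G B = b / m := rfl
  have hcB' : cond G (B \ {u}) = b' / (m - d) := by
    unfold cond
    rw [hvol, ← hb']
  rw [hcB, hcB', hbd]
  have hmd0 : (0 : ℝ) < m - d := by linarith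
  set φ : ℝ := b / m with hφ
  have hbφ : b = φ * m := (div_mul_cancel₀ b hm0.ne').symm
  rw [div_le_iff₀ hmd0]
  constructor <;> intro h1 <;> nlinarith [hbφ, hm0, hmd0]

end Paper

end
end

section
/- Let G=(V,E) be a finite simple graph and let S ⊆ B ⊆ V with vol_G(S) > 0 and vol_G(S) ≤ vol_G(B)/2. Let 0 ≤ ε ≤ 1 and suppose min{φ(S,B), φ(B∖S, B)} ≥ ε/3. Then φ_{G[B]}(S) ≥ e(S,B)/vol_G(S) ≥ (ε/7)·max{φ_G(S), φ_G(B∖S)}. -/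
open Classical

noncomputable section

namespace Paper

variable {V : Type*}

lemma eSet_comm (G : SimpleGraph V) (S B : Set V) (hSB : S ⊆ B) :
    eCount G (B \ S) B = eCount G S B := by
  unfold eCount
  congr 1
  rw [Set.diff_diff_cancel_left hSB]
  ext e
  simp only [Set.mem_setOf_eq]
  constructor
  · rintro ⟨he, u, v, rfl, hu, hv⟩
    exact ⟨he, v, u, Sym2.eq_swap, hv, hu⟩
  · rintro ⟨he, u, v, rfl, hu, hv⟩
    exact ⟨he, v, u, Sym2.eq_swap, hv, hu⟩

lemma bdry_split (G : SimpleGraph V) (S B : Set V) (hSB : S ⊆ B) :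
    bdry G S = {e | e ∈ G.edgeSet ∧ ∃ u v, e = s(u, v) ∧ u ∈ S ∧ v ∈ B \ S}
      ∪ {e | e ∈ G.edgeSet ∧ ∃ u v, e = s(u, v) ∧ u ∈ S ∧ v ∈ (Set.univ \ B) \ S} := by
  ext e
  induction e using Sym2.ind with
  | _ x y =>
    simp only [bdry, Set.mem_setOf_eq, Set.mem_union, Sym2.mem_iff]
    constructor
    · rintro ⟨he, ⟨u, hu, huS⟩, ⟨v, hv, hvS⟩⟩
      have hxy : (x ∈ S ∧ y ∉ S) ∨ (y ∈ S ∧ x ∉ S) := by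
        rcases hu with rfl | rfl <;> rcases hv with rfl | rfl <;> tauto
      rcases hxy with ⟨hx, hy⟩ | ⟨hy, hx⟩
      · by_cases hB : y ∈ B
        · exact Or.inl ⟨he, x, y, rfl, hx, hB, hy⟩
        · exact Or.inr ⟨he, x, y, rfl, hx, ⟨Set.mem_univ y, hB⟩, hy⟩
      · by_cases hB : x ∈ B
        · exact Or.inl ⟨he, y, x, Sym2.eq_swap, hy, hB, hx⟩
        · exact Or.inr ⟨he, y, x, Sym2.eq_swap, hy, ⟨Set.mem_univ x, hB⟩, hx⟩
    · rintro (⟨he, u, v, heq, huS, hv⟩ | ⟨he, u, v, heq, huS, hv⟩) <;>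
        rcases Sym2.eq_iff.mp heq with ⟨hx, hy⟩ | ⟨hx, hy⟩ <;> subst hx <;> subst hy
      · exact ⟨he, ⟨x, Or.inl rfl, huS⟩, ⟨y, Or.inr rfl, hv.2⟩⟩
      · exact ⟨he, ⟨y, Or.inr rfl, huS⟩, ⟨x, Or.inl rfl, hv.2⟩⟩
      · exact ⟨he, ⟨x, Or.inl rfl, huS⟩, ⟨y, Or.inr rfl, hv.2⟩⟩
      · exact ⟨he, ⟨y, Or.inr rfl, huS⟩, ⟨x, Or.inl rfl, hv.2⟩⟩

lemma bdry_disj (G : SimpleGraph V) (S B : Set V) :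
    Disjoint {e | e ∈ G.edgeSet ∧ ∃ u v, e = s(u, v) ∧ u ∈ S ∧ v ∈ B \ S}
      {e | e ∈ G.edgeSet ∧ ∃ u v, e = s(u, v) ∧ u ∈ S ∧ v ∈ (Set.univ \ B) \ S} := by
  rw [Set.disjoint_left]
  rintro e ⟨he, u, v, rfl, huS, hvB, hvS⟩ ⟨_, u', v', heq, hu'S, ⟨_, hv'B⟩, hv'S⟩
  rcases Sym2.eq_iff.mp heq with ⟨rfl, rfl⟩ | ⟨rfl, rfl⟩
  · exact hv'B hvB
  · exact hv'S huS

lemma bdry_restrict (G : SimpleGraph V) (S B : Set V) (hSB : S ⊆ B) :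
    bdry (restrict G B) S
      = {e | e ∈ G.edgeSet ∧ ∃ u v, e = s(u, v) ∧ u ∈ S ∧ v ∈ B \ S} := by
  ext e
  induction e using Sym2.ind with
  | _ x y =>
    simp only [bdry, Set.mem_setOf_eq, Sym2.mem_iff, SimpleGraph.mem_edgeSet, restrict]
    constructor
    · rintro ⟨⟨hadj, hxB, hyB⟩, ⟨u, hu, huS⟩, ⟨v, hv, hvS⟩⟩
      have hxy : (x ∈ S ∧ y ∉ S) ∨ (y ∈ S ∧ x ∉ S) := by
        rcases hu with rfl | rfl <;> rcases hv with rfl | rfl <;> tauto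
      rcases hxy with ⟨hx, hy⟩ | ⟨hy, hx⟩
      · exact ⟨hadj, x, y, rfl, hx, hyB, hy⟩
      · exact ⟨hadj, y, x, Sym2.eq_swap, hy, hxB, hx⟩
    · rintro ⟨he, u, v, heq, huS, hvB, hvS⟩
      rcases Sym2.eq_iff.mp heq with ⟨hx, hy⟩ | ⟨hx, hy⟩ <;> subst hx <;> subst hy
      · exact ⟨⟨he, hSB huS, hvB⟩, ⟨x, Or.inl rfl, huS⟩, ⟨y, Or.inr rfl, hvS⟩⟩
      · exact ⟨⟨he, hvB, hSB huS⟩, ⟨y, Or.inr rfl, huS⟩, ⟨x, Or.inl rfl, hvS⟩⟩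

lemma vol_split (G : SimpleGraph V) [Fintype V] (S B : Set V) (hSB : S ⊆ B) :
    vol G B = vol G S + vol G (B \ S) := by
  have h : vol G (S ∪ B \ S) = vol G S + vol G (B \ S) :=
    finsum_mem_union Set.disjoint_sdiff_right (Set.toFinite _) (Set.toFinite _)
  rwa [Set.union_diff_cancel hSB] at h

lemma vol_restrict_le (G : SimpleGraph V) [Fintype V] (B S : Set V) :
    vol (restrict G B) S ≤ vol G S := by
  rw [vol, vol, finsum_mem_eq_finite_toFinset_sum _ (Set.toFinite S),
    finsum_mem_eq_finite_toFinset_sum _ (Set.toFinite S)]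
  refine Finset.sum_le_sum fun v _ => ?_
  exact Set.ncard_le_ncard (fun w hw => (show G.Adj v w ∧ v ∈ B ∧ w ∈ B from hw).1) (Set.toFinite _)

lemma ecount_zero (G : SimpleGraph V) [Fintype V] (S B : Set V) (hSB : S ⊆ B)
    (h : vol (restrict G B) S = 0) : eCount G S B = 0 := by
  rw [eCount, Set.ncard_eq_zero (Set.toFinite _), Set.eq_empty_iff_forall_notMem]
  rintro e ⟨he, u, v, rfl, huS, hvB, hvS⟩
  rw [vol, finsum_mem_eq_finite_toFinset_sum _ (Set.toFinite S)] at h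
  have hdeg : deg (restrict G B) u = 0 :=
    (Finset.sum_eq_zero_iff.mp h) u ((Set.toFinite S).mem_toFinset.mpr huS)
  have hempty : (restrict G B).neighborSet u = ∅ :=
    (Set.ncard_eq_zero (Set.toFinite _)).mp hdeg
  have hv : v ∈ (restrict G B).neighborSet u := ⟨he, hSB huS, hvB⟩
  rw [hempty] at hv
  exact hv

lemma arith (a b c s t ε : ℝ) (ha : 0 ≤ a) (hb : 0 ≤ b) (hc : 0 ≤ c)
    (hs : 0 < s) (hst : s ≤ t) (hε0 : 0 < ε) (hε1 : ε ≤ 1)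
    (k1 : ε * (t * b) ≤ a * (3 * (s + t)))
    (k2 : ε * (s * c) ≤ a * (3 * (s + t))) :
    ε / 7 * max ((a + b) / s) ((a + c) / t) ≤ a / s := by
  have ht : 0 < t := lt_of_lt_of_le hs hst
  have h6 : ε * b * t ≤ 6 * a * t := by nlinarith [mul_nonneg ha (sub_nonneg.mpr hst)]
  have hεb : ε * b ≤ 6 * a := le_of_mul_le_mul_right h6 ht
  have h1 : ε / 7 * ((a + b) / s) ≤ a / s := by
    rw [div_mul_div_comm, div_le_div_iff₀ (by positivity) hs]
    nlinarith [mul_le_mul_of_nonneg_right hεb hs.le,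
      mul_nonneg (mul_nonneg ha hs.le) (sub_nonneg.mpr hε1)]
  have h2 : ε / 7 * ((a + c) / t) ≤ a / s := by
    rw [div_mul_div_comm, div_le_div_iff₀ (by positivity) hs]
    nlinarith [mul_nonneg ha (sub_nonneg.mpr hst),
      mul_nonneg (mul_nonneg ha hs.le) (sub_nonneg.mpr hε1)]
  rcases max_choice ((a + b) / s) ((a + c) / t) with h | h <;> rw [h]
  · exact h1
  · exact h2


/-- Lemma 2.3 of Oveis Gharan–Trevisan. -/
theorem statement17 [Fintype V] (G : SimpleGraph V) (S B : Set V) (hSB : S ⊆ B)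
    (hvolS : 0 < vol G S) (hhalf : (vol G S : ℝ) ≤ (vol G B : ℝ) / 2)
    (ε : ℝ) (hε0 : 0 ≤ ε) (hε1 : ε ≤ 1)
    (h : ε / 3 ≤ min (condPair G S B) (condPair G (B \ S) B)) :
    ε / 7 * max (cond G S) (cond G (B \ S)) ≤ (eCount G S B : ℝ) / (vol G S : ℝ) ∧
      (eCount G S B : ℝ) / (vol G S : ℝ) ≤ cond (restrict G B) S := by
  have hDS : B \ S ⊆ B := Set.diff_subset
  have ha : (0:ℝ) ≤ (eCount G S B : ℝ) := Nat.cast_nonneg _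
  have hs : (0:ℝ) < (vol G S : ℝ) := by exact_mod_cast hvolS
  constructor
  · -- first inequality
    have hvolB : (vol G B : ℝ) = (vol G S : ℝ) + (vol G (B \ S) : ℝ) := by
      rw [vol_split G S B hSB]; push_cast; ring
    have hst : (vol G S : ℝ) ≤ (vol G (B \ S) : ℝ) := by
      rw [hvolB] at hhalf; linarith
    have hb1 : (bdry G S).ncard = eCount G S B + eCount G S (Set.univ \ B) := by
      rw [bdry_split G S B hSB]
      exact Set.ncard_union_eq (bdry_disj G S B) (Set.toFinite _) (Set.toFinite _)
    have hb2 : (bdry G (B \ S)).ncard = eCount G S B + eCount G (B \ S) (Set.univ \ B) := by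
      rw [bdry_split G (B \ S) B hDS,
        Set.ncard_union_eq (bdry_disj G (B \ S) B) (Set.toFinite _) (Set.toFinite _)]
      exact congrArg (fun n => n + eCount G (B \ S) (Set.univ \ B)) (eSet_comm G S B hSB)
    have hcondS : cond G S
        = ((eCount G S B : ℝ) + (eCount G S (Set.univ \ B) : ℝ)) / (vol G S : ℝ) := by
      rw [cond, hb1]; push_cast; ring
    have hcondBS : cond G (B \ S)
        = ((eCount G S B : ℝ) + (eCount G (B \ S) (Set.univ \ B) : ℝ))
          / (vol G (B \ S) : ℝ) := by
      rw [cond, hb2]; push_cast; ring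
    rcases eq_or_lt_of_le hε0 with heq | hε0'
    · rw [← heq]
      norm_num
      positivity
    · have hx := le_trans h (min_le_left _ _)
      have hy := le_trans h (min_le_right _ _)
      rw [condPair, hvolB] at hx
      rw [condPair, hvolB, Set.diff_diff_cancel_left hSB, eSet_comm G S B hSB] at hy
      have hsum : (0:ℝ) < (vol G S : ℝ) + (vol G (B \ S) : ℝ) := by
        have := Nat.cast_nonneg (α := ℝ) (vol G (B \ S)); linarith
      -- denominators positive
      have hy1pos : (0:ℝ) < ((vol G (B \ S) : ℝ) / ((vol G S : ℝ) + (vol G (B \ S) : ℝ)))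
          * (eCount G S (Set.univ \ B) : ℝ) := by
        rcases (by positivity :
            (0:ℝ) ≤ ((vol G (B \ S) : ℝ) / ((vol G S : ℝ) + (vol G (B \ S) : ℝ)))
              * (eCount G S (Set.univ \ B) : ℝ)).lt_or_eq with h' | h'
        · exact h'
        · exfalso; rw [← h', div_zero] at hx; linarith
      have hy2pos : (0:ℝ) < ((vol G S : ℝ) / ((vol G S : ℝ) + (vol G (B \ S) : ℝ)))
          * (eCount G (B \ S) (Set.univ \ B) : ℝ) := by
        rcases (by positivity :
            (0:ℝ) ≤ ((vol G S : ℝ) / ((vol G S : ℝ) + (vol G (B \ S) : ℝ)))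
              * (eCount G (B \ S) (Set.univ \ B) : ℝ)).lt_or_eq with h' | h'
        · exact h'
        · exfalso; rw [← h', div_zero] at hy; linarith
      have k1' := (le_div_iff₀ hy1pos).mp hx
      have k2' := (le_div_iff₀ hy2pos).mp hy
      have k1 : ε * ((vol G (B \ S) : ℝ) * (eCount G S (Set.univ \ B) : ℝ))
          ≤ (eCount G S B : ℝ) * (3 * ((vol G S : ℝ) + (vol G (B \ S) : ℝ))) := by
        have e1 : ε / 3 * (((vol G (B \ S) : ℝ) / ((vol G S : ℝ) + (vol G (B \ S) : ℝ)))
            * (eCount G S (Set.univ \ B) : ℝ))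
            = ε * ((vol G (B \ S) : ℝ) * (eCount G S (Set.univ \ B) : ℝ))
              / (3 * ((vol G S : ℝ) + (vol G (B \ S) : ℝ))) := by
          field_simp
        rw [e1, div_le_iff₀ (by positivity)] at k1'
        exact k1'
      have k2 : ε * ((vol G S : ℝ) * (eCount G (B \ S) (Set.univ \ B) : ℝ))
          ≤ (eCount G S B : ℝ) * (3 * ((vol G S : ℝ) + (vol G (B \ S) : ℝ))) := by
        have e2 : ε / 3 * (((vol G S : ℝ) / ((vol G S : ℝ) + (vol G (B \ S) : ℝ)))
            * (eCount G (B \ S) (Set.univ \ B) : ℝ))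
            = ε * ((vol G S : ℝ) * (eCount G (B \ S) (Set.univ \ B) : ℝ))
              / (3 * ((vol G S : ℝ) + (vol G (B \ S) : ℝ))) := by
          field_simp
        rw [e2, div_le_iff₀ (by positivity)] at k2'
        exact k2'
      rw [hcondS, hcondBS]
      exact arith _ _ _ _ _ ε ha (Nat.cast_nonneg _) (Nat.cast_nonneg _) hs hst hε0' hε1 k1 k2
  · -- second inequality
    rcases Nat.eq_zero_or_pos (vol (restrict G B) S) with h0 | hpos
    · have hA := ecount_zero G S B hSB h0
      rw [hA, cond]
      push_cast
      rw [zero_div]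
      positivity
    · have hn : ((bdry (restrict G B) S).ncard : ℝ) = (eCount G S B : ℝ) := by
        rw [bdry_restrict G S B hSB]; rfl
      rw [cond, hn]
      refine div_le_div_of_nonneg_left ha (by exact_mod_cast hpos) ?_
      exact_mod_cast vol_restrict_le G B S

end Paper

end
end
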